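/- arXiv:2103.11876 — 4 statements merged into one kernel-verified Lean document; each statement's English description precedes it below -/
import Mathlib

section
/- Let r be an integer and let l, m, p be non-negative integers with p + l > r. Then Σ_{n=1}^∞ h_n^{(r)} / ((n+m)^p C(n+m+l, l)) = Σ_{k=0}^m C(m,k) (-1)^k Σ_{n=1}^∞ h_n^{(r-k)} / (n^p C(n+l, l)), all series being convergent. -/
open Finset

/-- Generalized harmonic number `H_n^(r) = ∑_{k=1}^n 1/k^r`. -/
noncomputable def Hgen (r n : ℕ) : ℝ := ∑ k ∈ Finset.Icc 1 n, (1 : ℝ) / (k : ℝ) ^ r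

/-- Hyperharmonic numbers of non-negative order: `hpos 0 n = 1/n`,
`hpos (r+1) n = ∑_{k=1}^n hpos r k`.  In particular `hpos 1 n = H_n`. -/
noncomputable def hpos : ℕ → ℕ → ℝ
  | 0, n => 1 / (n : ℝ)
  | r + 1, n => ∑ k ∈ Finset.Icc 1 n, hpos r k

/-- Hyperharmonic numbers of negative order: `hneg r n = h_n^(-r)` for `r ≥ 1`. -/
noncomputable def hneg (r n : ℕ) : ℝ :=
  if r < n then (-1 : ℝ) ^ r / (((n - r : ℕ) : ℝ) * (Nat.choose n r : ℝ))
  else ∑ k ∈ Finset.range n, (Nat.choose r k : ℝ) * (-1 : ℝ) ^ k / ((n - k : ℕ) : ℝ)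

/-- Hyperharmonic numbers of arbitrary integer order. -/
noncomputable def hh (r : ℤ) (n : ℕ) : ℝ :=
  if 0 ≤ r then hpos r.toNat n else hneg (-r).toNat n

/-- Riemann zeta value `ζ(k) = ∑_{n=1}^∞ 1/n^k`. -/
noncomputable def zetaVal (k : ℕ) : ℝ := ∑' n : ℕ, 1 / ((n : ℝ) + 1) ^ k

/-- Linear Euler sum `ζ_{H^(s)}(t) = ∑_{n=1}^∞ H_n^(s)/n^t`. -/
noncomputable def eulerSum (s t : ℕ) : ℝ := ∑' n : ℕ, Hgen s (n + 1) / ((n : ℝ) + 1) ^ t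

/-- The set of Riemann zeta values `ζ(k)`, `k ≥ 2`. -/
def zetaSet : Set ℝ := {x | ∃ k : ℕ, 2 ≤ k ∧ x = zetaVal k}

/-- The set of Riemann zeta values together with linear Euler sums. -/
def zetaEulerSet : Set ℝ :=
  zetaSet ∪ {x | ∃ s t : ℕ, 1 ≤ s ∧ 2 ≤ t ∧ x = eulerSum s t}

noncomputable def g (s n : ℕ) : ℝ :=
  ∑ k ∈ Finset.range n, (Nat.choose s k : ℝ) * (-1 : ℝ) ^ k / ((n - k : ℕ) : ℝ)

lemma g_succ (s n : ℕ) : g (s+1) (n+1) = g s (n+1) - g s n := by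
  simp only [g]
  rw [Finset.sum_range_succ' (fun k => (Nat.choose (s+1) k : ℝ) * (-1:ℝ)^k / ((n+1-k:ℕ):ℝ)),
      Finset.sum_range_succ' (fun k => (Nat.choose s k : ℝ) * (-1:ℝ)^k / ((n+1-k:ℕ):ℝ))]
  simp only [Nat.succ_sub_succ, Nat.choose_succ_succ, Nat.cast_add, add_mul, add_div,
    Finset.sum_add_distrib, pow_succ, mul_neg, mul_one, neg_mul, neg_div,
    Finset.sum_neg_distrib, Nat.choose_zero_right, Nat.cast_one, one_mul, pow_zero,
    Nat.sub_zero]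
  ring

lemma g_zero (n : ℕ) (hn : 1 ≤ n) : g 0 n = 1 / (n : ℝ) := by
  rw [g, Finset.sum_eq_single 0]
  · simp
  · intro b _ hb
    obtain ⟨b, rfl⟩ : ∃ c, b = c + 1 := ⟨b-1, (Nat.succ_pred_eq_of_pos (Nat.pos_of_ne_zero hb)).symm⟩
    simp [Nat.choose]
  · intro habs; simp at habs; omega

lemma g_closed : ∀ s n : ℕ, s < n → g s n = (-1:ℝ)^s / (((n - s : ℕ):ℝ) * (Nat.choose n s : ℝ)) := by
  intro s
  induction s with
  | zero => intro n hn; simp [g_zero n hn]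
  | succ s ih =>
    intro n hn
    obtain ⟨n, rfl⟩ : ∃ c, n = c + 1 := ⟨n-1, by omega⟩
    rw [g_succ, ih (n+1) (by omega), ih n (by omega)]
    have hs : s < n := by omega
    have h1n : (n+1) * Nat.choose n s = (n+1-s) * Nat.choose (n+1) s := by
      rw [Nat.add_one_mul_choose_eq, Nat.choose_succ_right_eq, Nat.mul_comm]
    have h2n : (s+1) * Nat.choose (n+1) (s+1) = (n+1-s) * Nat.choose (n+1) s := by
      rw [Nat.mul_comm, Nat.choose_succ_right_eq, Nat.mul_comm]
    have e1 : ((n+1-s:ℕ):ℝ) = (n:ℝ) + 1 - s := by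
      rw [Nat.cast_sub (by omega : s ≤ n+1)]; push_cast; ring
    have e2 : ((n-s:ℕ):ℝ) = (n:ℝ) - s := Nat.cast_sub (by omega : s ≤ n)
    have e3 : ((n+1-(s+1):ℕ):ℝ) = (n:ℝ) - s := by
      rw [Nat.cast_sub (by omega : s+1 ≤ n+1)]; push_cast; ring
    have H1 : ((n:ℝ)+1) * (Nat.choose n s : ℝ) = ((n:ℝ)+1-s) * (Nat.choose (n+1) s : ℝ) := by
      have := congrArg (fun x : ℕ => (x:ℝ)) h1n
      push_cast [Nat.cast_sub (show s ≤ n+1 by omega)] at this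
      linarith
    have H2 : ((s:ℝ)+1) * (Nat.choose (n+1) (s+1) : ℝ) = ((n:ℝ)+1-s) * (Nat.choose (n+1) s : ℝ) := by
      have := congrArg (fun x : ℕ => (x:ℝ)) h2n
      push_cast [Nat.cast_sub (show s ≤ n+1 by omega)] at this
      linarith
    have cB : (Nat.choose n s : ℝ) ≠ 0 := by
      have := Nat.choose_pos (le_of_lt hs); positivity
    have cA : (Nat.choose (n+1) s : ℝ) ≠ 0 := by
      have := Nat.choose_pos (show s ≤ n+1 by omega); positivity
    have cD : (Nat.choose (n+1) (s+1) : ℝ) ≠ 0 := by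
      have := Nat.choose_pos (show s+1 ≤ n+1 by omega); positivity
    have hns : ((n:ℝ) - s) ≠ 0 := by
      have : (s:ℝ) < n := by exact_mod_cast hs
      linarith
    have hc : ((n:ℝ) + 1 - s) ≠ 0 := by
      have : (s:ℝ) < n := by exact_mod_cast hs
      linarith
    rw [e1, e2, e3, pow_succ]
    rw [div_sub_div _ _ (mul_ne_zero hc cA) (mul_ne_zero hns cB),
      div_eq_div_iff (mul_ne_zero (mul_ne_zero hc cA) (mul_ne_zero hns cB)) (mul_ne_zero hns cD)]
    linear_combination ((-1:ℝ)^s * ((n:ℝ)-s) * (Nat.choose (n+1) (s+1):ℝ)) * H1 -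
      ((-1:ℝ)^s * ((n:ℝ)-s) * (Nat.choose n s:ℝ)) * H2

lemma hneg_eq_g (s n : ℕ) : hneg s n = g s n := by
  rw [hneg]
  split
  · rw [g_closed s n ‹_›]
  · rfl

lemma hpos_zero : ∀ r, hpos r 0 = 0
  | 0 => by simp [hpos]
  | r+1 => by simp [hpos]

lemma hh_zero (r : ℤ) : hh r 0 = 0 := by
  unfold hh; split
  · exact hpos_zero _
  · simp [hneg]

-- key recurrence: hh r n = hh r (n-1) + hh (r-1) n for n ≥ 1
lemma hh_rec (r : ℤ) (n : ℕ) : hh r (n+1) = hh r n + hh (r-1) (n+1) := by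
  rcases lt_trichotomy r 0 with hr | hr | hr
  · -- r ≤ -1 : all hneg; use g recurrence
    obtain ⟨s, rfl⟩ : ∃ s : ℕ, r = -(s+1) := ⟨(-r).toNat - 1, by omega⟩
    have h1 : ¬ (0:ℤ) ≤ -(s+1:ℤ) := by omega
    have h2 : ¬ (0:ℤ) ≤ -(s+1:ℤ) - 1 := by omega
    simp only [hh, h1, h2, if_false]
    have e1 : (-(-(s+1:ℤ))).toNat = s+1 := by omega
    have e2 : (-(-(s+1:ℤ)-1)).toNat = s+2 := by omega
    rw [e1, e2, hneg_eq_g, hneg_eq_g, hneg_eq_g]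
    have := g_succ (s+1) n
    push_cast at this ⊢
    linarith [this]
  · -- r = 0 : 1/(n+1) = 1/n + g 1 (n+1)
    subst hr
    have h2 : ¬ (0:ℤ) ≤ (0:ℤ) - 1 := by omega
    simp only [hh, le_refl, if_true, h2, if_false]
    norm_num [hpos]
    rw [hneg_eq_g]
    have : g 1 (n+1) = g 0 (n+1) - g 0 n := g_succ 0 n
    rcases Nat.eq_zero_or_pos n with rfl | hn
    · norm_num at this ⊢
      rw [this, g_zero 1 le_rfl]
      norm_num [g]
    · rw [this, g_zero (n+1) (by omega), g_zero n hn]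
      push_cast
      ring
  · -- r ≥ 1 : hpos recurrence
    obtain ⟨t, rfl⟩ : ∃ t : ℕ, r = (t:ℤ)+1 := ⟨(r-1).toNat, by omega⟩
    have h1 : (0:ℤ) ≤ (t:ℤ)+1 := by omega
    have h2 : (0:ℤ) ≤ (t:ℤ)+1-1 := by omega
    simp only [hh, h1, h2, if_true]
    have e1 : ((t:ℤ)+1).toNat = t+1 := by omega
    have e2 : ((t:ℤ)+1-1).toNat = t := by omega
    rw [e1, e2]
    show hpos (t+1) (n+1) = hpos (t+1) n + hpos t (n+1)
    rw [hpos, hpos]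
    rw [← Finset.sum_Icc_succ_top (by omega : 1 ≤ n+1)]

lemma key_id (m : ℕ) : ∀ (r : ℤ) (n : ℕ),
    ∑ k ∈ Finset.range (m+1), (Nat.choose m k : ℝ) * (-1:ℝ)^k * hh (r - k) (n+1)
      = if m ≤ n then hh r (n+1-m) else 0 := by
  induction m with
  | zero => intro r n; simp
  | succ m ih =>
    intro r n
    have step : ∑ k ∈ Finset.range (m+2), (Nat.choose (m+1) k : ℝ) * (-1:ℝ)^k * hh (r - k) (n+1)
        = (∑ k ∈ Finset.range (m+1), (Nat.choose m k : ℝ) * (-1:ℝ)^k * hh (r - k) (n+1))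
          - ∑ k ∈ Finset.range (m+1), (Nat.choose m k : ℝ) * (-1:ℝ)^k * hh ((r-1) - k) (n+1) := by
      rw [Finset.sum_range_succ'
        (fun k => (Nat.choose (m+1) k : ℝ) * (-1:ℝ)^k * hh (r - k) (n+1))]
      have expand : ∀ i ∈ Finset.range (m+1),
          (Nat.choose (m+1) (i+1) : ℝ) * (-1:ℝ)^(i+1) * hh (r - (i+1:ℕ)) (n+1)
          = (Nat.choose m (i+1) : ℝ) * (-1:ℝ)^(i+1) * hh (r - (i+1:ℕ)) (n+1)
            + (-(1:ℝ)) * ((Nat.choose m i : ℝ) * (-1:ℝ)^i * hh ((r-1) - i) (n+1)) := by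
        intro i _
        rw [Nat.choose_succ_succ]
        have : r - ((i:ℕ)+1:ℕ) = (r-1) - i := by push_cast; ring
        rw [this]
        push_cast
        ring
      rw [Finset.sum_congr rfl expand, Finset.sum_add_distrib]
      have top : ∑ i ∈ Finset.range (m+1),
          (Nat.choose m (i+1) : ℝ) * (-1:ℝ)^(i+1) * hh (r - (i+1:ℕ)) (n+1)
          + (Nat.choose (m+1) 0 : ℝ) * (-1:ℝ)^0 * hh (r - (0:ℕ)) (n+1)
          = ∑ k ∈ Finset.range (m+1), (Nat.choose m k : ℝ) * (-1:ℝ)^k * hh (r - k) (n+1) := by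
        rw [Finset.sum_range_succ
          (fun i => (Nat.choose m (i+1) : ℝ) * (-1:ℝ)^(i+1) * hh (r - ((i+1:ℕ):ℤ)) (n+1)) m]
        rw [Finset.sum_range_succ'
          (fun k => (Nat.choose m k : ℝ) * (-1:ℝ)^k * hh (r - k) (n+1)) m]
        simp [Nat.choose_succ_self]
      rw [add_right_comm, top]
      simp only [neg_one_mul, Finset.sum_neg_distrib]
      ring
    rw [step, ih r n, ih (r-1) n]
    rcases Nat.lt_or_ge n (m+1) with hn | hn
    · rcases Nat.lt_or_ge n m with hn2 | hn2
      · simp [Nat.not_le.mpr hn2, Nat.not_le.mpr hn]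
      · have : n = m := by omega
        subst this
        simp only [le_refl, if_true, Nat.not_le.mpr hn, if_false]
        have h0 := hh_rec r 0
        rw [hh_zero] at h0
        have e : n+1-n = 1 := by omega
        rw [e]
        linarith [h0]
    · have h1 : m ≤ n := by omega
      have h2 : m+1 ≤ n := hn
      simp only [h1, h2, if_true]
      have e : n+1-m = (n-m)+1 := by omega
      have e2 : n+1-(m+1) = n-m := by omega
      rw [e, e2, hh_rec r (n-m)]
      ring

lemma hpos_nonneg : ∀ t n, 0 ≤ hpos t n
  | 0, n => by unfold hpos; positivity
  | t+1, n => Finset.sum_nonneg fun k _ => hpos_nonneg t k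

lemma harm_le_sqrt : ∀ n : ℕ, hpos 1 n ≤ 2 * Real.sqrt n := by
  intro n
  induction n with
  | zero => simp [hpos]
  | succ n ih =>
    have : hpos 1 (n+1) = hpos 1 n + 1/((n+1:ℕ):ℝ) := by
      show ∑ k ∈ Finset.Icc 1 (n+1), hpos 0 k = (∑ k ∈ Finset.Icc 1 n, hpos 0 k) + 1/((n+1:ℕ):ℝ)
      rw [Finset.sum_Icc_succ_top (by omega : 1 ≤ n+1)]
      norm_num [hpos]
    rw [this]
    have ha : Real.sqrt n ^ 2 = n := Real.sq_sqrt (by positivity)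
    have hb : Real.sqrt (n+1) ^ 2 = (n:ℝ)+1 := by
      rw [Real.sq_sqrt (by positivity)]
    have ha0 : 0 ≤ Real.sqrt n := Real.sqrt_nonneg _
    have hb0 : 0 ≤ Real.sqrt (n+1) := Real.sqrt_nonneg _
    have hb1 : 1 ≤ Real.sqrt (n+1) := by
      have h9 : (0:ℝ) ≤ (n:ℝ) := by positivity
      have := Real.sqrt_le_sqrt (show (1:ℝ) ≤ (n:ℝ)+1 by linarith)
      simpa using this
    have key : 1/((n+1:ℕ):ℝ) ≤ 2*Real.sqrt (n+1) - 2*Real.sqrt n := by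
      rw [div_le_iff₀ (by positivity)]
      push_cast
      nlinarith [sq_nonneg (Real.sqrt (n+1) - Real.sqrt n)]
    have e : ((n+1:ℕ):ℝ) = (n:ℝ)+1 := by push_cast; ring
    rw [e] at key ⊢
    linarith

lemma hpos_bound : ∀ t n, hpos (t+1) n ≤ 2 * (n:ℝ)^t * Real.sqrt n := by
  intro t
  induction t with
  | zero => intro n; simpa using harm_le_sqrt n
  | succ t ih =>
    intro n
    have : hpos (t+2) n = ∑ k ∈ Finset.Icc 1 n, hpos (t+1) k := rfl
    rw [this]
    calc ∑ k ∈ Finset.Icc 1 n, hpos (t+1) k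
        ≤ ∑ k ∈ Finset.Icc 1 n, 2 * (n:ℝ)^t * Real.sqrt n := by
          apply Finset.sum_le_sum
          intro k hk
          simp only [Finset.mem_Icc] at hk
          calc hpos (t+1) k ≤ 2*(k:ℝ)^t * Real.sqrt k := ih k
            _ ≤ 2*(n:ℝ)^t * Real.sqrt n := by
                have hkn : (k:ℝ) ≤ n := by exact_mod_cast hk.2
                have : Real.sqrt k ≤ Real.sqrt n := Real.sqrt_le_sqrt hkn
                have hp : (k:ℝ)^t ≤ (n:ℝ)^t := pow_le_pow_left₀ (by positivity) hkn t
                have := Real.sqrt_nonneg (k:ℝ)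
                nlinarith [Real.sqrt_nonneg (n:ℝ), pow_nonneg (by positivity : (0:ℝ) ≤ (k:ℝ)) t]
      _ = (n:ℕ) * (2*(n:ℝ)^t * Real.sqrt n) := by
          rw [Finset.sum_const, Nat.card_Icc]; simp
      _ ≤ 2*(n:ℝ)^(t+1) * Real.sqrt n := by
          have := Real.sqrt_nonneg (n:ℝ)
          have h0 : (0:ℝ) ≤ (n:ℝ) := by positivity
          rw [pow_succ]
          nlinarith [pow_nonneg h0 t]

lemma hneg_crude (s n : ℕ) : |hneg s (n+1)| ≤ 2^s := by
  have h2s : (1:ℝ) ≤ 2^s := one_le_pow₀ (by norm_num)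
  rw [hneg]
  split
  · rename_i hlt
    have h1 : (1:ℝ) ≤ ((n+1-s:ℕ):ℝ) := by
      have : 1 ≤ n+1-s := by omega
      exact_mod_cast this
    have h2 : (1:ℝ) ≤ (Nat.choose (n+1) s : ℝ) := by
      have := Nat.choose_pos (show s ≤ n+1 by omega)
      exact_mod_cast this
    rw [abs_div, abs_pow, abs_neg, abs_one, one_pow, abs_of_nonneg (by positivity)]
    calc (1:ℝ)/(((n+1-s:ℕ):ℝ) * (Nat.choose (n+1) s:ℝ)) ≤ 1 := by
          rw [div_le_one (by positivity)]
          nlinarith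
      _ ≤ 2^s := h2s
  · rename_i hge
    calc |∑ k ∈ Finset.range (n+1), (Nat.choose s k : ℝ) * (-1:ℝ)^k / ((n+1-k:ℕ):ℝ)|
        ≤ ∑ k ∈ Finset.range (n+1), |(Nat.choose s k : ℝ) * (-1:ℝ)^k / ((n+1-k:ℕ):ℝ)| :=
          Finset.abs_sum_le_sum_abs _ _
      _ ≤ ∑ k ∈ Finset.range (n+1), (Nat.choose s k : ℝ) := by
          apply Finset.sum_le_sum
          intro k hk
          simp only [Finset.mem_range] at hk
          have h1 : (1:ℝ) ≤ ((n+1-k:ℕ):ℝ) := by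
            have : 1 ≤ n+1-k := by omega
            exact_mod_cast this
          rw [abs_div, abs_mul, abs_pow, abs_neg, abs_one, one_pow, mul_one,
            Nat.abs_cast, abs_of_nonneg (by positivity : (0:ℝ) ≤ ((n+1-k:ℕ):ℝ))]
          calc (Nat.choose s k : ℝ)/((n+1-k:ℕ):ℝ) ≤ (Nat.choose s k : ℝ)/1 := by
                apply div_le_div_of_nonneg_left (by positivity) (by norm_num) h1
            _ = (Nat.choose s k : ℝ) := by ring
      _ ≤ ∑ k ∈ Finset.range (s+1), (Nat.choose s k : ℝ) := by
          apply Finset.sum_le_sum_of_subset_of_nonneg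
          · apply Finset.range_subset_range.mpr; omega
          · intro k _ _; positivity
      _ = 2^s := by
          rw [← Nat.cast_sum]
          rw [Nat.sum_range_choose]
          push_cast; ring

lemma hneg_bound (s : ℕ) : ∃ C : ℝ, 0 ≤ C ∧
    ∀ n : ℕ, |hneg s (n+1)| ≤ C / ((n+1:ℕ):ℝ)^(s+1) := by
  refine ⟨(Nat.factorial s : ℝ) * 2^(s+1) + 2^s * ((2*s+2:ℕ):ℝ)^(s+1), by positivity, fun n => ?_⟩
  have hpow : (0:ℝ) < ((n+1:ℕ):ℝ)^(s+1) := by positivity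
  rw [le_div_iff₀ hpow]
  rcases Nat.lt_or_ge n (2*s+1) with hsmall | hbig
  · have e1 : ((n+1:ℕ):ℝ)^(s+1) ≤ ((2*s+2:ℕ):ℝ)^(s+1) := by
      apply pow_le_pow_left₀ (by positivity)
      exact_mod_cast (show n+1 ≤ 2*s+2 by omega)
    have := hneg_crude s n
    have h2 : (0:ℝ) ≤ 2^s := by positivity
    nlinarith [abs_nonneg (hneg s (n+1)), pow_nonneg (show (0:ℝ) ≤ ((2*s+2:ℕ):ℝ) by positivity) (s+1),
      mul_le_mul this e1 (le_of_lt hpow) h2,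
      mul_nonneg (mul_nonneg (Nat.cast_nonneg (Nat.factorial s)) (pow_nonneg (by norm_num : (0:ℝ) ≤ 2) (s+1))) (le_of_lt hpow)]
  · -- big n : closed form with good decay
    have hlt : s < n+1 := by omega
    rw [hneg, if_pos hlt]
    set x : ℝ := ((n+1-s:ℕ):ℝ) with hx
    set K : ℝ := (Nat.choose (n+1) s : ℝ) with hK
    have hx1 : (1:ℝ) ≤ x := by
      rw [hx]; exact_mod_cast (show 1 ≤ n+1-s by omega)
    have hK1 : (1:ℝ) ≤ K := by
      rw [hK]; exact_mod_cast Nat.choose_pos (show s ≤ n+1 by omega)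
    have hx0 : (0:ℝ) < x := lt_of_lt_of_le zero_lt_one hx1
    have hK0 : (0:ℝ) < K := lt_of_lt_of_le zero_lt_one hK1
    have habs : |(-1:ℝ)^s / (x*K)| = 1/(x*K) := by
      rw [abs_div, abs_pow, abs_neg, abs_one, one_pow, abs_of_nonneg (by positivity)]
    rw [habs]
    -- x^s ≤ s! * K
    have hxs : x^s ≤ (Nat.factorial s : ℝ) * K := by
      have hp := Nat.pow_le_choose (α := ℝ) s (n+1)
      have hmono : ((n+1-s)^s : ℕ) ≤ ((n+1+1-s)^s : ℕ) := Nat.pow_le_pow_left (by omega) s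
      have hfac : (0:ℝ) < (Nat.factorial s : ℝ) := by exact_mod_cast Nat.factorial_pos s
      rw [div_le_iff₀ hfac] at hp
      calc x^s = (((n+1-s)^s : ℕ) : ℝ) := by rw [hx]; push_cast; ring
        _ ≤ (((n+1+1-s)^s : ℕ) : ℝ) := by exact_mod_cast hmono
        _ ≤ K * (Nat.factorial s : ℝ) := by rw [hK]; exact_mod_cast hp
        _ = (Nat.factorial s : ℝ) * K := by ring
    -- (n+1) ≤ 2x
    have h2x : ((n+1:ℕ):ℝ) ≤ 2*x := by
      have : n+1 ≤ 2*(n+1-s) := by omega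
      calc ((n+1:ℕ):ℝ) ≤ ((2*(n+1-s):ℕ):ℝ) := by exact_mod_cast this
        _ = 2*x := by rw [hx]; push_cast; ring
    have hnp : (0:ℝ) ≤ ((n+1:ℕ):ℝ) := by positivity
    have hkey : ((n+1:ℕ):ℝ)^(s+1) ≤ 2^(s+1) * x * ((Nat.factorial s:ℝ) * K) := by
      calc ((n+1:ℕ):ℝ)^(s+1) ≤ (2*x)^(s+1) := pow_le_pow_left₀ hnp h2x (s+1)
        _ = 2^(s+1) * x * x^s := by ring
        _ ≤ 2^(s+1) * x * ((Nat.factorial s:ℝ) * K) := by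
            apply mul_le_mul_of_nonneg_left hxs (mul_nonneg (by positivity) hx0.le)

    calc 1/(x*K) * ((n+1:ℕ):ℝ)^(s+1) ≤ 1/(x*K) * (2^(s+1) * x * ((Nat.factorial s:ℝ) * K)) := by
          apply mul_le_mul_of_nonneg_left hkey
            (one_div_nonneg.mpr (mul_nonneg hx0.le hK0.le))
      _ = (Nat.factorial s : ℝ) * 2^(s+1) := by field_simp
      _ ≤ (Nat.factorial s : ℝ) * 2^(s+1) + 2^s * ((2*s+2:ℕ):ℝ)^(s+1) := by
          have : (0:ℝ) ≤ 2^s * ((2*s+2:ℕ):ℝ)^(s+1) := by positivity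
          linarith

lemma hh_bound_nonpos (r : ℤ) (hr : r ≤ 0) : ∃ C : ℝ, 0 ≤ C ∧
    ∀ n : ℕ, |hh r (n+1)| ≤ C / ((n+1:ℕ):ℝ)^((-r).toNat + 1) := by
  rcases eq_or_lt_of_le hr with rfl | hrneg
  · refine ⟨1, zero_le_one, fun n => ?_⟩
    have : hh 0 (n+1) = 1/((n+1:ℕ):ℝ) := by
      simp [hh, hpos]
    rw [this]
    simp only [neg_zero, Int.toNat_zero, zero_add, pow_one]
    rw [abs_of_nonneg (by positivity)]
  · obtain ⟨C, hC0, hC⟩ := hneg_bound (-r).toNat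
    refine ⟨C, hC0, fun n => ?_⟩
    have : hh r (n+1) = hneg (-r).toNat (n+1) := by
      rw [hh, if_neg (by omega)]
    rw [this]
    exact hC n

lemma sum_inv_sq : Summable (fun n : ℕ => 1/((n+1:ℕ):ℝ)^2) := by
  have h : Summable (fun n : ℕ => 1/(n:ℝ)^2) :=
    (Real.summable_one_div_nat_pow (p := 2)).mpr one_lt_two
  exact h.comp_injective (add_left_injective 1)

lemma sum_inv_32 : Summable (fun n : ℕ => 1/(((n+1:ℕ):ℝ) * Real.sqrt ((n+1:ℕ):ℝ))) := by
  have h : Summable (fun n : ℕ => 1/(n:ℝ)^(3/2:ℝ)) :=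
    (Real.summable_one_div_nat_rpow (p := (3/2 : ℝ))).mpr (by norm_num)
  have h2 : Summable (fun n : ℕ => 1/((n+1:ℕ):ℝ)^(3/2:ℝ)) :=
    h.comp_injective (add_left_injective 1)
  apply h2.congr
  intro n
  have hx : (0:ℝ) < ((n+1:ℕ):ℝ) := by positivity
  have : ((n+1:ℕ):ℝ)^((3/2:ℝ)) = ((n+1:ℕ):ℝ) * Real.sqrt ((n+1:ℕ):ℝ) := by
    rw [show (3/2:ℝ) = 1 + 1/2 by norm_num, Real.rpow_add hx, Real.rpow_one,
      Real.sqrt_eq_rpow]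
  simp only [this]

lemma summ_main (r : ℤ) (l m p : ℕ) (h : r < (p:ℤ) + l) :
    Summable (fun n : ℕ => hh r (n+1) / (((n+1+m:ℕ):ℝ)^p * (Nat.choose (n+1+m+l) l : ℝ))) := by
  have hfac : (0:ℝ) < (Nat.factorial l : ℝ) := by exact_mod_cast Nat.factorial_pos l
  -- denominator lower bound
  have hD : ∀ n : ℕ, ((n+1:ℕ):ℝ)^(p+l) / (Nat.factorial l : ℝ)
      ≤ ((n+1+m:ℕ):ℝ)^p * (Nat.choose (n+1+m+l) l : ℝ) := by
    intro n
    have hc : (((n+1:ℕ)^l : ℕ):ℝ) / (Nat.factorial l : ℝ) ≤ (Nat.choose (n+1+m+l) l : ℝ) := by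
      have hp := Nat.pow_le_choose (α := ℝ) l (n+1+m+l)
      have hmono : ((n+1)^l : ℕ) ≤ ((n+1+m+l+1-l)^l : ℕ) := Nat.pow_le_pow_left (by omega) l
      calc (((n+1:ℕ)^l : ℕ):ℝ) / (Nat.factorial l : ℝ)
          ≤ (((n+1+m+l+1-l)^l : ℕ):ℝ) / (Nat.factorial l : ℝ) := by
            gcongr
        _ ≤ (Nat.choose (n+1+m+l) l : ℝ) := by exact_mod_cast hp
    have hpp : ((n+1:ℕ):ℝ)^p ≤ ((n+1+m:ℕ):ℝ)^p := by
      apply pow_le_pow_left₀ (by positivity)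
      exact_mod_cast (show n+1 ≤ n+1+m by omega)
    calc ((n+1:ℕ):ℝ)^(p+l) / (Nat.factorial l : ℝ)
        = ((n+1:ℕ):ℝ)^p * (((n+1:ℕ):ℝ)^l / (Nat.factorial l : ℝ)) := by rw [pow_add]; ring
      _ ≤ ((n+1+m:ℕ):ℝ)^p * (Nat.choose (n+1+m+l) l : ℝ) := by
          apply mul_le_mul hpp _ (by positivity) (by positivity)
          calc ((n+1:ℕ):ℝ)^l / (Nat.factorial l : ℝ)
              = (((n+1:ℕ)^l : ℕ):ℝ) / (Nat.factorial l : ℝ) := by push_cast; ring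
            _ ≤ (Nat.choose (n+1+m+l) l : ℝ) := hc
  have hDpos : ∀ n : ℕ, (0:ℝ) < ((n+1+m:ℕ):ℝ)^p * (Nat.choose (n+1+m+l) l : ℝ) := by
    intro n
    have := Nat.choose_pos (show l ≤ n+1+m+l by omega)
    have : (0:ℝ) < (Nat.choose (n+1+m+l) l : ℝ) := by exact_mod_cast this
    positivity
  -- step 1: |f n| ≤ |hh r (n+1)| * l! / (n+1)^(p+l)
  have hstep : ∀ n : ℕ, |hh r (n+1) / (((n+1+m:ℕ):ℝ)^p * (Nat.choose (n+1+m+l) l : ℝ))|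
      ≤ |hh r (n+1)| * (Nat.factorial l : ℝ) / ((n+1:ℕ):ℝ)^(p+l) := by
    intro n
    rw [abs_div, abs_of_pos (hDpos n)]
    have hlow : (0:ℝ) < ((n+1:ℕ):ℝ)^(p+l) / (Nat.factorial l : ℝ) := by positivity
    calc |hh r (n+1)| / (((n+1+m:ℕ):ℝ)^p * (Nat.choose (n+1+m+l) l : ℝ))
        ≤ |hh r (n+1)| / (((n+1:ℕ):ℝ)^(p+l) / (Nat.factorial l : ℝ)) :=
          div_le_div_of_nonneg_left (abs_nonneg _) hlow (hD n)
      _ = |hh r (n+1)| * (Nat.factorial l : ℝ) / ((n+1:ℕ):ℝ)^(p+l) := by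
          rw [div_div_eq_mul_div]
  rcases le_or_gt r 0 with hr | hr
  · -- nonpositive order
    obtain ⟨C, hC0, hC⟩ := hh_bound_nonpos r hr
    set s := (-r).toNat with hs
    apply Summable.of_norm_bounded (g := fun n => (C * (Nat.factorial l : ℝ)) * (1/((n+1:ℕ):ℝ)^2))
      (sum_inv_sq.mul_left _)
    intro n
    rw [Real.norm_eq_abs]
    have hx1 : (1:ℝ) ≤ ((n+1:ℕ):ℝ) := by exact_mod_cast Nat.succ_le_succ (Nat.zero_le n)
    have hexp : 2 ≤ p + l + (s+1) := by omega
    calc |hh r (n+1) / (((n+1+m:ℕ):ℝ)^p * (Nat.choose (n+1+m+l) l : ℝ))|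
        ≤ |hh r (n+1)| * (Nat.factorial l : ℝ) / ((n+1:ℕ):ℝ)^(p+l) := hstep n
      _ ≤ (C / ((n+1:ℕ):ℝ)^(s+1)) * (Nat.factorial l : ℝ) / ((n+1:ℕ):ℝ)^(p+l) := by
          gcongr
          exact hC n
      _ = (C * (Nat.factorial l : ℝ)) / ((n+1:ℕ):ℝ)^(p+l+(s+1)) := by
          have hxne : ((n+1:ℕ):ℝ) ≠ 0 := by positivity
          rw [pow_add]
          field_simp
          ring
      _ ≤ (C * (Nat.factorial l : ℝ)) / ((n+1:ℕ):ℝ)^2 :=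
          div_le_div_of_nonneg_left (mul_nonneg hC0 hfac.le) (by positivity)
            (pow_le_pow_right₀ hx1 hexp)
      _ = (C * (Nat.factorial l : ℝ)) * (1/((n+1:ℕ):ℝ)^2) := by ring
  · -- positive order
    obtain ⟨u, hu⟩ : ∃ u : ℕ, r.toNat = u + 1 := ⟨r.toNat - 1, by omega⟩
    have hhr : ∀ n : ℕ, hh r (n+1) = hpos (u+1) (n+1) := by
      intro n; rw [hh, if_pos (by omega), hu]
    have hle : u + 2 ≤ p + l := by omega
    apply Summable.of_norm_bounded
      (g := fun n => (2 * (Nat.factorial l : ℝ)) * (1/(((n+1:ℕ):ℝ) * Real.sqrt ((n+1:ℕ):ℝ))))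
      (sum_inv_32.mul_left _)
    intro n
    rw [Real.norm_eq_abs]
    set x : ℝ := ((n+1:ℕ):ℝ) with hxdef
    have hx1 : (1:ℝ) ≤ x := by rw [hxdef]; exact_mod_cast Nat.succ_le_succ (Nat.zero_le n)
    have hx0 : (0:ℝ) < x := lt_of_lt_of_le zero_lt_one hx1
    have hsq : Real.sqrt x * Real.sqrt x = x := Real.mul_self_sqrt hx0.le
    have hsq0 : (0:ℝ) < Real.sqrt x := Real.sqrt_pos.mpr hx0
    have hb : |hh r (n+1)| ≤ 2 * x^u * Real.sqrt x := by
      rw [hhr n, abs_of_nonneg (hpos_nonneg _ _)]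
      exact hpos_bound u (n+1)
    calc |hh r (n+1) / (((n+1+m:ℕ):ℝ)^p * (Nat.choose (n+1+m+l) l : ℝ))|
        ≤ |hh r (n+1)| * (Nat.factorial l : ℝ) / x^(p+l) := hstep n
      _ ≤ (2 * x^u * Real.sqrt x) * (Nat.factorial l : ℝ) / x^(p+l) := by
          gcongr
      _ ≤ (2 * (Nat.factorial l : ℝ)) * (1/(x * Real.sqrt x)) := by
          rw [mul_one_div, div_le_div_iff₀ (by positivity) (by positivity)]
          have e : 2 * x^u * Real.sqrt x * (Nat.factorial l : ℝ) * (x * Real.sqrt x)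
              = (2 * (Nat.factorial l:ℝ)) * x^(u+2) := by
            linear_combination (2 * x^u * (Nat.factorial l:ℝ) * x) * hsq
          rw [e]
          have h2 : x^(u+2) ≤ x^(p+l) := pow_le_pow_right₀ hx1 hle
          calc (2 * (Nat.factorial l:ℝ)) * x^(u+2)
              ≤ (2 * (Nat.factorial l:ℝ)) * x^(p+l) :=
                mul_le_mul_of_nonneg_left h2 (by positivity)
            _ = 2 * (Nat.factorial l:ℝ) * x^(p+l) := by ring

theorem stmt14 (r : ℤ) (l m p : ℕ) (h : (p : ℤ) + l > r) :
    Summable (fun n : ℕ => hh r (n + 1) /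
      (((n + 1 + m : ℕ) : ℝ) ^ p * (Nat.choose (n + 1 + m + l) l : ℝ))) ∧
    (∀ k ≤ m, Summable (fun n : ℕ => hh (r - (k : ℤ)) (n + 1) /
      (((n + 1 : ℕ) : ℝ) ^ p * (Nat.choose (n + 1 + l) l : ℝ)))) ∧
    (∑' n : ℕ, hh r (n + 1) /
      (((n + 1 + m : ℕ) : ℝ) ^ p * (Nat.choose (n + 1 + m + l) l : ℝ))) =
      ∑ k ∈ Finset.range (m + 1), (Nat.choose m k : ℝ) * (-1 : ℝ) ^ k *
        ∑' n : ℕ, hh (r - (k : ℤ)) (n + 1) /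
          (((n + 1 : ℕ) : ℝ) ^ p * (Nat.choose (n + 1 + l) l : ℝ)) := by
  have hsum1 : Summable (fun n : ℕ => hh r (n + 1) /
      (((n + 1 + m : ℕ) : ℝ) ^ p * (Nat.choose (n + 1 + m + l) l : ℝ))) :=
    summ_main r l m p h
  have hsum2 : ∀ k : ℕ, k ≤ m → Summable (fun n : ℕ => hh (r - (k : ℤ)) (n + 1) /
      (((n + 1 : ℕ) : ℝ) ^ p * (Nat.choose (n + 1 + l) l : ℝ))) := by
    intro k _
    have := summ_main (r - k) l 0 p (by omega)
    simpa using this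
  refine ⟨hsum1, hsum2, ?_⟩
  set D0 : ℕ → ℝ := fun n => ((n+1:ℕ):ℝ)^p * (Nat.choose (n+1+l) l : ℝ) with hD0
  set G : ℕ → ℝ := fun n => (if m ≤ n then hh r (n+1-m) else 0) / D0 n with hG0
  have ha : ∀ n : ℕ, ∑ k ∈ Finset.range (m+1),
      (Nat.choose m k : ℝ) * (-1:ℝ)^k * (hh (r - (k:ℤ)) (n+1) / D0 n) = G n := by
    intro n
    have : ∀ k : ℕ, (Nat.choose m k : ℝ) * (-1:ℝ)^k * (hh (r - (k:ℤ)) (n+1) / D0 n)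
        = ((Nat.choose m k : ℝ) * (-1:ℝ)^k * hh (r - (k:ℤ)) (n+1)) / D0 n := by
      intro k; ring
    simp only [this]
    rw [← Finset.sum_div, key_id m r n, hG0]
  have hb : ∀ k ∈ Finset.range (m+1), Summable (fun n : ℕ =>
      (Nat.choose m k : ℝ) * (-1:ℝ)^k * (hh (r - (k:ℤ)) (n+1) / D0 n)) := by
    intro k hk
    simp only [Finset.mem_range] at hk
    exact (hsum2 k (by omega)).mul_left _
  have hGsum : Summable G := (summable_sum hb).congr ha
  have hzero : ∑ i ∈ Finset.range m, G i = 0 := by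
    apply Finset.sum_eq_zero
    intro i hi
    simp only [Finset.mem_range] at hi
    rw [hG0]
    simp only [if_neg (by omega : ¬ m ≤ i)]
    exact zero_div _
  have e2 : ∑' n : ℕ, G (n+m) = ∑' n : ℕ, G n := by
    have := Summable.sum_add_tsum_nat_add (f := G) m hGsum
    rw [hzero, zero_add] at this
    exact this
  have e1 : (∑' n : ℕ, hh r (n + 1) /
      (((n + 1 + m : ℕ) : ℝ) ^ p * (Nat.choose (n + 1 + m + l) l : ℝ))) = ∑' n : ℕ, G (n+m) := by
    apply tsum_congr
    intro n
    rw [hG0]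
    simp only [if_pos (by omega : m ≤ n+m)]
    rw [hD0]
    have em : n+m+1-m = n+1 := by omega
    have em2 : n+m+1 = n+1+m := by omega
    have em3 : n+m+1+l = n+1+m+l := by omega
    simp only [em, em2, em3, show n+1+m-m = n+1 from by omega]
  rw [e1, e2]
  have e3 : ∑' n : ℕ, G n = ∑ k ∈ Finset.range (m+1), ∑' n : ℕ,
      (Nat.choose m k : ℝ) * (-1:ℝ)^k * (hh (r - (k:ℤ)) (n+1) / D0 n) := by
    rw [← Summable.tsum_finsetSum hb]
    exact tsum_congr (fun n => (ha n).symm)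
  rw [e3]
  apply Finset.sum_congr rfl
  intro k _
  rw [tsum_mul_left]
end

section
/- Let j, l, p be positive integers. Then Σ_{n=1}^∞ 1/(n^p (n+j) C(n+l,l)) = Σ_{m=1}^{p-1} ((-1)^{m-1}/j^m) { ζ(p+1-m) + Σ_{a=1}^l C(l,a) (-1)^a μ(p-m, a) } + ((-1)^{p-1}/j^{p-1}) Σ_{s=0}^l (-1)^s C(l,s) B₁(s,j), where μ(q,a) = Σ_{n=1}^∞ 1/(n^q (n+a)) and B₁(s,j) = (H_s - H_j)/(s - j) if s ≠ j, and B₁(j,j) = ζ(2) - H_j^{(2)}. -/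
open Finset

/-- `μ(q,a) = ∑_{n=1}^∞ 1/(n^q (n+a))`. -/
noncomputable def mu (q a : ℕ) : ℝ :=
  ∑' n : ℕ, 1 / (((n + 1 : ℕ) : ℝ) ^ q * ((n + 1 + a : ℕ) : ℝ))

/-- `B₁(s,j)`. -/
noncomputable def B1 (s j : ℕ) : ℝ :=
  if s = j then zetaVal 2 - Hgen 2 j
  else (Hgen 1 s - Hgen 1 j) / ((s : ℝ) - (j : ℝ))


open Filter Topology

lemma sum_range_shift (f : ℕ → ℝ) (n : ℕ) :
    ∑ i ∈ range n, f (i + 1) = ∑ k ∈ Icc 1 n, f k := by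
  rw [← Finset.Ico_add_one_right_eq_Icc, Finset.sum_Ico_eq_sum_range]
  simp [Nat.add_comm]

lemma Hgen_eq_range (r n : ℕ) : Hgen r n = ∑ i ∈ range n, 1 / ((i : ℝ) + 1) ^ r := by
  rw [Hgen, ← sum_range_shift (fun k => 1 / (k : ℝ) ^ r)]
  push_cast
  simp [add_comm, one_div]

lemma summable_base : Summable (fun n : ℕ => 1 / ((n : ℝ) + 1) ^ 2) := by
  have := Real.summable_one_div_nat_pow.2 (le_refl 2)
  have h2 := (summable_nat_add_iff 1).2 this
  simpa using h2

lemma summable_of_le_base (g : ℕ → ℝ) (hg : ∀ n, 0 ≤ g n)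
    (hle : ∀ n, g n ≤ 1 / ((n : ℝ) + 1) ^ 2) : Summable g :=
  Summable.of_nonneg_of_le hg hle summable_base

lemma choose_cast_pos (n l : ℕ) : (0 : ℝ) < (Nat.choose (n + 1 + l) l : ℝ) := by
  exact_mod_cast Nat.choose_pos (by omega)

lemma prod_pos_aux (x : ℝ) (hx : 0 < x) (l : ℕ) :
    0 < ∏ k ∈ range l, (x + k) := by
  apply Finset.prod_pos
  intro k _
  positivity

/-- `(n+1) * C(n+1+l, l) * l! = ∏_{k<l+1} (n+1+k)` -/
lemma prodForm (n l : ℕ) :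
    ((n : ℝ) + 1) * (Nat.choose (n + 1 + l) l : ℝ) * (Nat.factorial l : ℝ) =
      ∏ k ∈ range (l + 1), ((n : ℝ) + 1 + k) := by
  induction l with
  | zero => simp
  | succ l ih =>
    rw [Finset.prod_range_succ, ← ih]
    have key : (n + 1 + (l + 1)).choose (l + 1) * (l + 1) =
        (n + 1 + l + 1) * ((n + 1 + l).choose l) :=
      (Nat.add_one_mul_choose_eq (n + 1 + l) l).symm
    have h' : ((Nat.choose (n + 1 + (l + 1)) (l + 1) : ℝ)) * ((l : ℝ) + 1) =
        ((n : ℝ) + 1 + l + 1) * (Nat.choose (n + 1 + l) l : ℝ) := by exact_mod_cast key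
    rw [Nat.factorial_succ]
    push_cast
    linear_combination ((n : ℝ) + 1) * (Nat.factorial l : ℝ) * h'

lemma PF1 (l : ℕ) : ∀ x : ℝ, 0 < x →
    ∑ s ∈ range (l + 1), (-1 : ℝ) ^ s * (Nat.choose l s : ℝ) / (x + s)
      = (Nat.factorial l : ℝ) / ∏ k ∈ range (l + 1), (x + k) := by
  induction l with
  | zero => intro x hx; simp
  | succ l ih =>
    intro x hx
    have hx1 : (0:ℝ) < x + 1 := by linarith
    have ih1 := ih x hx
    have ih2 := ih (x + 1) hx1
    have hS : ∑ s ∈ range (l + 2), (-1 : ℝ) ^ s * (Nat.choose (l + 1) s : ℝ) / (x + s)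
        = (∑ s ∈ range (l + 1), (-1 : ℝ) ^ s * (Nat.choose l s : ℝ) / (x + s))
          - ∑ s ∈ range (l + 1), (-1 : ℝ) ^ s * (Nat.choose l s : ℝ) / ((x + 1) + s) := by
      rw [Finset.sum_range_succ'
        (fun s => (-1 : ℝ) ^ s * (Nat.choose (l + 1) s : ℝ) / (x + s)) (l + 1)]
      have hsplit : ∀ i : ℕ, (-1 : ℝ) ^ (i + 1) * (Nat.choose (l + 1) (i + 1) : ℝ) / (x + (i + 1 : ℕ))
          = (-1 : ℝ) ^ (i + 1) * (Nat.choose l (i + 1) : ℝ) / (x + ((i : ℝ) + 1))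
            - (-1 : ℝ) ^ i * (Nat.choose l i : ℝ) / ((x + 1) + i) := by
        intro i
        have hc : ((Nat.choose (l + 1) (i + 1) : ℕ) : ℝ)
            = (Nat.choose l i : ℝ) + (Nat.choose l (i + 1) : ℝ) := by
          exact_mod_cast Nat.choose_succ_succ l i
        have hxi : x + ((i : ℝ) + 1) ≠ 0 := by positivity
        push_cast
        rw [hc]
        field_simp
        ring
      rw [Finset.sum_congr rfl (fun i _ => hsplit i), Finset.sum_sub_distrib]
      have hlast : ∑ i ∈ range (l + 1), (-1 : ℝ) ^ (i + 1) * (Nat.choose l (i + 1) : ℝ) / (x + ((i : ℝ) + 1))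
          = ∑ i ∈ range l, (-1 : ℝ) ^ (i + 1) * (Nat.choose l (i + 1) : ℝ) / (x + ((i : ℝ) + 1)) := by
        rw [Finset.sum_range_succ]
        simp [Nat.choose_succ_self]
      rw [hlast]
      have hSx : ∑ s ∈ range (l + 1), (-1 : ℝ) ^ s * (Nat.choose l s : ℝ) / (x + s)
          = (∑ i ∈ range l, (-1 : ℝ) ^ (i + 1) * (Nat.choose l (i + 1) : ℝ) / (x + ((i : ℝ) + 1)))
            + 1 / x := by
        rw [Finset.sum_range_succ'
          (fun s => (-1 : ℝ) ^ s * (Nat.choose l s : ℝ) / (x + s)) l]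
        push_cast
        simp
      rw [hSx]
      push_cast
      simp
      ring
    rw [hS, ih1, ih2]
    have hQ1 : ∏ k ∈ range (l + 1 + 1), (x + (k : ℝ))
        = (∏ k ∈ range (l + 1), (x + (k : ℝ))) * (x + ((l : ℝ) + 1)) := by
      rw [Finset.prod_range_succ]; push_cast; ring_nf
    have hQ2 : ∏ k ∈ range (l + 1 + 1), (x + (k : ℝ))
        = x * ∏ k ∈ range (l + 1), ((x + 1) + (k : ℝ)) := by
      rw [Finset.prod_range_succ' (fun k => x + (k : ℝ)) (l + 1)]
      have hc : ∀ i ∈ range (l + 1), x + ((i + 1 : ℕ) : ℝ) = (x + 1) + (i : ℝ) :=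
        fun i _ => by push_cast; ring
      rw [Finset.prod_congr rfl hc]
      push_cast
      ring
    have hP1 : (0:ℝ) < ∏ k ∈ range (l + 1), (x + (k : ℝ)) := prod_pos_aux x hx (l + 1)
    have hP2 : (0:ℝ) < ∏ k ∈ range (l + 1), ((x + 1) + (k : ℝ)) := prod_pos_aux (x + 1) hx1 (l + 1)
    rw [hQ1]
    have hfact : (Nat.factorial (l + 1) : ℝ) = ((l : ℝ) + 1) * (Nat.factorial l : ℝ) := by
      rw [Nat.factorial_succ]; push_cast; ring
    rw [hfact]
    have hxl : (0:ℝ) < x + ((l : ℝ) + 1) := by positivity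
    have key : (∏ k ∈ range (l + 1), (x + (k : ℝ))) * (x + ((l : ℝ) + 1))
        = x * ∏ k ∈ range (l + 1), ((x + 1) + (k : ℝ)) := by rw [← hQ1, hQ2]
    rw [div_sub_div _ _ (ne_of_gt hP1) (ne_of_gt hP2),
      div_eq_div_iff (by positivity) (by positivity)]
    linear_combination (-(Nat.factorial l : ℝ) * (∏ k ∈ range (l + 1), (x + (k : ℝ)))) * key

lemma PF1' (n l : ℕ) :
    1 / (((n : ℝ) + 1) * (Nat.choose (n + 1 + l) l : ℝ))
      = ∑ s ∈ range (l + 1), (-1 : ℝ) ^ s * (Nat.choose l s : ℝ) / ((n : ℝ) + 1 + s) := by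
  rw [PF1 l ((n : ℝ) + 1) (by positivity), ← prodForm n l]
  have h1 : (0 : ℝ) < (n : ℝ) + 1 := by positivity
  have h2 := choose_cast_pos n l
  have h3 : (0 : ℝ) < (Nat.factorial l : ℝ) := by positivity
  field_simp

lemma PF2 (P j : ℕ) (hj : 1 ≤ j) : ∀ x : ℝ, 0 < x →
    1 / (x ^ (P + 1) * (x + j))
      = (∑ i ∈ range P, (-1 : ℝ) ^ i / (j : ℝ) ^ (i + 1) * (1 / x ^ (P + 1 - i)))
        + (-1 : ℝ) ^ P / (j : ℝ) ^ P * (1 / (x * (x + j))) := by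
  have hj0 : (0 : ℝ) < (j : ℝ) := by exact_mod_cast hj
  induction P with
  | zero => intro x hx; simp [pow_one]
  | succ P ih =>
    intro x hx
    have hxj : (0 : ℝ) < x + j := by positivity
    have recur : 1 / (x ^ (P + 1 + 1) * (x + j))
        = 1 / ((j : ℝ) * x ^ (P + 1 + 1)) - (1 / (j : ℝ)) * (1 / (x ^ (P + 1) * (x + j))) := by
      have hxx : x ^ (P + 1 + 1) = x ^ (P + 1) * x := by ring
      field_simp
      ring
    rw [recur, ih x hx]
    rw [Finset.sum_range_succ'
      (fun i => (-1 : ℝ) ^ i / (j : ℝ) ^ (i + 1) * (1 / x ^ (P + 1 + 1 - i))) P]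
    simp only [show ∀ i : ℕ, P + 1 + 1 - (i + 1) = P + 1 - i from fun i => by omega,
      Nat.sub_zero]
    have hsum : ∑ i ∈ range P, ((-1 : ℝ) ^ (i + 1) / (j : ℝ) ^ (i + 1 + 1) * (1 / x ^ (P + 1 - i)))
        = -(1 / (j : ℝ)) * ∑ i ∈ range P, ((-1 : ℝ) ^ i / (j : ℝ) ^ (i + 1) * (1 / x ^ (P + 1 - i))) := by
      rw [Finset.mul_sum]
      refine Finset.sum_congr rfl (fun i _ => ?_)
      have hx0 : x ^ (P + 1 - i) ≠ 0 := by positivity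
      field_simp
      ring
    rw [hsum]
    have hjP : (j : ℝ) ^ P ≠ 0 := by positivity
    have hxP : x ^ (P + 1 + 1) ≠ 0 := by positivity
    field_simp
    ring

lemma summable_two_factor (f g : ℕ → ℝ) (hf : ∀ n : ℕ, (n : ℝ) + 1 ≤ f n)
    (hg : ∀ n : ℕ, (n : ℝ) + 1 ≤ g n) : Summable (fun n => 1 / (f n * g n)) := by
  apply summable_of_le_base
  · intro n
    have h1 : (0:ℝ) < f n := lt_of_lt_of_le (by positivity) (hf n)
    have h2 : (0:ℝ) < g n := lt_of_lt_of_le (by positivity) (hg n)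
    positivity
  · intro n
    have h0 : (0:ℝ) < (n : ℝ) + 1 := by positivity
    have h1 : (0:ℝ) < f n := lt_of_lt_of_le h0 (hf n)
    have h2 : (0:ℝ) < g n := lt_of_lt_of_le h0 (hg n)
    apply one_div_le_one_div_of_le (by positivity)
    calc ((n:ℝ)+1)^2 = ((n:ℝ)+1) * ((n:ℝ)+1) := by ring
      _ ≤ f n * g n := mul_le_mul (hf n) (hg n) (le_of_lt h0) (le_of_lt h1)

lemma le_pow_self (n r : ℕ) (hr : 1 ≤ r) : (n : ℝ) + 1 ≤ ((n : ℝ) + 1) ^ r :=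
  le_self_pow₀ (by linarith [Nat.cast_nonneg (α := ℝ) n]) (by omega)

lemma one_le_choose_cast (n l : ℕ) : (1 : ℝ) ≤ (Nat.choose (n + 1 + l) l : ℝ) := by
  exact_mod_cast Nat.one_le_iff_ne_zero.2 (Nat.choose_pos (by omega)).ne'

lemma zetaTail (j : ℕ) :
    ∑' n : ℕ, 1 / ((n : ℝ) + 1 + j) ^ 2 = zetaVal 2 - Hgen 2 j := by
  have hs := summable_base
  have h := Summable.sum_add_tsum_nat_add (f := fun n : ℕ => 1 / ((n : ℝ) + 1) ^ 2) j hs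
  have h1 : ∑' (i : ℕ), 1 / (((i + j : ℕ) : ℝ) + 1) ^ 2 = ∑' n : ℕ, 1 / ((n : ℝ) + 1 + j) ^ 2 :=
    tsum_congr fun i => by push_cast; ring_nf
  have h2 : ∑ i ∈ range j, 1 / ((i : ℝ) + 1) ^ 2 = Hgen 2 j := (Hgen_eq_range 2 j).symm
  rw [zetaVal, ← h, ← h1, h2]
  push_cast
  ring

lemma teleSum (k : ℕ) :
    ∑' n : ℕ, 1 / (((n : ℝ) + 1 + k) * ((n : ℝ) + 2 + k)) = 1 / ((k : ℝ) + 1) := by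
  have H : HasSum (fun n : ℕ => 1 / (((n : ℝ) + 1 + k) * ((n : ℝ) + 2 + k))) (1 / ((k : ℝ) + 1)) := by
    rw [hasSum_iff_tendsto_nat_of_nonneg (fun i => by positivity)]
    have hps : ∀ N : ℕ, ∑ n ∈ range N, 1 / (((n : ℝ) + 1 + k) * ((n : ℝ) + 2 + k))
        = 1 / ((k : ℝ) + 1) - 1 / ((N : ℝ) + 1 + k) := by
      intro N
      have htel := Finset.sum_range_sub' (fun n : ℕ => 1 / ((n : ℝ) + 1 + k)) N
      have hpt : ∀ n ∈ range N, 1 / (((n : ℝ) + 1 + k) * ((n : ℝ) + 2 + k))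
          = 1 / ((n : ℝ) + 1 + k) - 1 / (((n + 1 : ℕ) : ℝ) + 1 + k) := by
        intro n _
        have h1 : (0:ℝ) < (n : ℝ) + 1 + k := by positivity
        have h2 : (0:ℝ) < (n : ℝ) + 2 + k := by positivity
        push_cast
        rw [div_sub_div _ _ (by linarith) (by linarith)]
        congr 1 <;> ring
      rw [Finset.sum_congr rfl hpt, htel]
      norm_num
      ring_nf
    rw [tendsto_congr hps]
    have hz : Tendsto (fun N : ℕ => 1 / ((N : ℝ) + 1 + k)) atTop (𝓝 0) := by
      apply squeeze_zero (fun N => by positivity) (fun N => ?_)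
        tendsto_one_div_add_atTop_nhds_zero_nat
      apply one_div_le_one_div_of_le (by positivity)
      simp [Nat.cast_nonneg]
    simpa using tendsto_const_nhds.sub hz
  exact H.tsum_eq

lemma range_sub_sum (f : ℕ → ℝ) (s j : ℕ) (h : s ≤ j) :
    (∑ i ∈ range j, f i) - ∑ i ∈ range s, f i = ∑ k ∈ range (j - s), f (s + k) := by
  rw [Finset.range_eq_Ico, ← Finset.sum_Ico_consecutive f (Nat.zero_le s) h,
    ← Finset.range_eq_Ico, Finset.sum_Ico_eq_sum_range]
  ring

lemma cast_le_add_left (s n : ℕ) : (n : ℝ) + 1 ≤ (n : ℝ) + 1 + s := by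
  have : (0:ℝ) ≤ s := Nat.cast_nonneg s
  linarith

lemma summable_B1Term (s j : ℕ) :
    Summable (fun n : ℕ => 1 / (((n : ℝ) + 1 + s) * ((n : ℝ) + 1 + j))) :=
  summable_two_factor _ _ (cast_le_add_left s) (cast_le_add_left j)

lemma B1lt (s j : ℕ) (h : s < j) :
    ∑' n : ℕ, 1 / (((n : ℝ) + 1 + s) * ((n : ℝ) + 1 + j))
      = (Hgen 1 j - Hgen 1 s) / ((j : ℝ) - s) := by
  have hsr : (s : ℝ) < j := by exact_mod_cast h
  have hjs : (0 : ℝ) < (j : ℝ) - s := by linarith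
  have pw : ∀ n : ℕ, 1 / (((n : ℝ) + 1 + s) * ((n : ℝ) + 1 + j))
      = (1 / ((j : ℝ) - s)) * ∑ k ∈ range (j - s),
          1 / (((n : ℝ) + 1 + ((s + k : ℕ) : ℝ)) * ((n : ℝ) + 2 + ((s + k : ℕ) : ℝ))) := by
    intro n
    have h1 : (0:ℝ) < (n : ℝ) + 1 + s := by positivity
    have h2 : (0:ℝ) < (n : ℝ) + 1 + j := by positivity
    have key : ∑ k ∈ range (j - s),
        1 / (((n : ℝ) + 1 + ((s + k : ℕ) : ℝ)) * ((n : ℝ) + 2 + ((s + k : ℕ) : ℝ)))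
        = 1 / ((n : ℝ) + 1 + s) - 1 / ((n : ℝ) + 1 + j) := by
      have tel := Finset.sum_range_sub' (fun k : ℕ => 1 / ((n : ℝ) + 1 + s + k)) (j - s)
      have hpt : ∀ k ∈ range (j - s),
          1 / (((n : ℝ) + 1 + ((s + k : ℕ) : ℝ)) * ((n : ℝ) + 2 + ((s + k : ℕ) : ℝ)))
          = 1 / ((n : ℝ) + 1 + s + k) - 1 / ((n : ℝ) + 1 + s + ((k + 1 : ℕ) : ℝ)) := by
        intro k _
        have hk1 : (0:ℝ) < (n : ℝ) + 1 + s + k := by positivity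
        have hk2 : (0:ℝ) < (n : ℝ) + 2 + s + k := by positivity
        push_cast
        rw [div_sub_div _ _ (by linarith) (by linarith)]
        congr 1 <;> ring
      rw [Finset.sum_congr rfl hpt, tel]
      have hc : ((j - s : ℕ) : ℝ) = (j : ℝ) - s := by
        exact_mod_cast Nat.cast_sub h.le
      rw [hc]
      norm_num
    rw [key]
    field_simp
    ring
  rw [tsum_congr pw, tsum_mul_left,
    Summable.tsum_finsetSum (fun k _ => summable_two_factor _ _
      (fun n => cast_le_add_left (s + k) n)
      (fun n => by have := cast_le_add_left (s + k) n; linarith))]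
  have hts : ∀ k ∈ range (j - s), ∑' n : ℕ,
      1 / (((n : ℝ) + 1 + ((s + k : ℕ) : ℝ)) * ((n : ℝ) + 2 + ((s + k : ℕ) : ℝ)))
      = 1 / (((s + k : ℕ) : ℝ) + 1) := fun k _ => teleSum (s + k)
  rw [Finset.sum_congr rfl hts]
  have hH : ∑ k ∈ range (j - s), 1 / (((s + k : ℕ) : ℝ) + 1) = Hgen 1 j - Hgen 1 s := by
    rw [Hgen_eq_range, Hgen_eq_range]
    simp only [pow_one]
    rw [range_sub_sum (fun i : ℕ => 1 / ((i : ℝ) + 1)) s j h.le]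
  rw [hH, one_div_mul_eq_div]

lemma B1sum (s j : ℕ) :
    ∑' n : ℕ, 1 / (((n : ℝ) + 1 + s) * ((n : ℝ) + 1 + j)) = B1 s j := by
  rcases lt_trichotomy s j with h | h | h
  · rw [B1, if_neg (by omega), B1lt s j h,
      show (Hgen 1 j - Hgen 1 s) = -(Hgen 1 s - Hgen 1 j) by ring,
      show ((j : ℝ) - s) = -((s : ℝ) - j) by ring, neg_div_neg_eq]
  · subst h
    rw [B1, if_pos rfl, ← zetaTail s]
    exact tsum_congr fun n => by rw [sq]
  · rw [B1, if_neg (by omega), ← B1lt j s h]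
    exact tsum_congr fun n => by rw [mul_comm]

lemma mu_eq (q a : ℕ) :
    mu q a = ∑' n : ℕ, 1 / (((n : ℝ) + 1) ^ q * ((n : ℝ) + 1 + a)) :=
  tsum_congr fun n => by push_cast; ring_nf

lemma summable_choose_term (q l : ℕ) (hq : 2 ≤ q) :
    Summable (fun n : ℕ => 1 / (((n : ℝ) + 1) ^ q * (Nat.choose (n + 1 + l) l : ℝ))) := by
  apply summable_of_le_base
  · intro n
    have := choose_cast_pos n l
    positivity
  · intro n
    have hx : (1:ℝ) ≤ (n : ℝ) + 1 := by linarith [Nat.cast_nonneg (α := ℝ) n]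
    have hC := one_le_choose_cast n l
    apply one_div_le_one_div_of_le (by positivity)
    calc ((n:ℝ)+1)^2 ≤ ((n:ℝ)+1)^q := pow_le_pow_right₀ hx hq
      _ ≤ ((n:ℝ)+1)^q * (Nat.choose (n + 1 + l) l : ℝ) :=
          le_mul_of_one_le_right (by positivity) hC

lemma summable_U_term (l j : ℕ) :
    Summable (fun n : ℕ => 1 / (((n : ℝ) + 1) * ((n : ℝ) + 1 + j) * (Nat.choose (n + 1 + l) l : ℝ))) := by
  apply summable_of_le_base
  · intro n
    have := choose_cast_pos n l
    positivity
  · intro n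
    have hx : (0:ℝ) ≤ (n : ℝ) := Nat.cast_nonneg n
    have hj : (0:ℝ) ≤ (j : ℝ) := Nat.cast_nonneg j
    have hC := one_le_choose_cast n l
    apply one_div_le_one_div_of_le (by positivity)
    calc ((n:ℝ)+1)^2 = ((n:ℝ)+1) * ((n:ℝ)+1) := by ring
      _ ≤ ((n:ℝ)+1) * ((n:ℝ)+1+j) := by nlinarith
      _ ≤ ((n:ℝ)+1) * ((n:ℝ)+1+j) * (Nat.choose (n + 1 + l) l : ℝ) :=
          le_mul_of_one_le_right (by nlinarith) hC

lemma LemmaA (r l : ℕ) (hr : 1 ≤ r) :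
    ∑' n : ℕ, 1 / (((n : ℝ) + 1) ^ (r + 1) * (Nat.choose (n + 1 + l) l : ℝ))
      = zetaVal (r + 1) +
        ∑ a ∈ Icc 1 l, (Nat.choose l a : ℝ) * (-1 : ℝ) ^ a * mu r a := by
  have pw : ∀ n : ℕ, 1 / (((n : ℝ) + 1) ^ (r + 1) * (Nat.choose (n + 1 + l) l : ℝ))
      = ∑ s ∈ range (l + 1), ((-1 : ℝ) ^ s * (Nat.choose l s : ℝ)) *
          (1 / (((n : ℝ) + 1) ^ r * ((n : ℝ) + 1 + s))) := by
    intro n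
    have hx : (0:ℝ) < (n : ℝ) + 1 := by positivity
    have hC := choose_cast_pos n l
    have step : 1 / (((n : ℝ) + 1) ^ (r + 1) * (Nat.choose (n + 1 + l) l : ℝ))
        = (1 / ((n : ℝ) + 1) ^ r) * (1 / (((n : ℝ) + 1) * (Nat.choose (n + 1 + l) l : ℝ))) := by
      rw [pow_succ, mul_assoc, ← one_div_mul_one_div]
    rw [step, PF1' n l, Finset.mul_sum]
    refine Finset.sum_congr rfl fun s _ => ?_
    have hs : (0:ℝ) < (n : ℝ) + 1 + s := by positivity
    field_simp
  rw [tsum_congr pw,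
    Summable.tsum_finsetSum (fun s _ => Summable.mul_left _
      (summable_two_factor _ _ (fun n => le_pow_self n r hr) (cast_le_add_left s)))]
  have hmul : ∀ s ∈ range (l + 1),
      ∑' n : ℕ, ((-1 : ℝ) ^ s * (Nat.choose l s : ℝ)) *
          (1 / (((n : ℝ) + 1) ^ r * ((n : ℝ) + 1 + s)))
      = ((-1 : ℝ) ^ s * (Nat.choose l s : ℝ)) *
          ∑' n : ℕ, 1 / (((n : ℝ) + 1) ^ r * ((n : ℝ) + 1 + s)) :=
    fun s _ => tsum_mul_left
  rw [Finset.sum_congr rfl hmul,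
    Finset.sum_range_succ' (fun s => ((-1 : ℝ) ^ s * (Nat.choose l s : ℝ)) *
      ∑' n : ℕ, 1 / (((n : ℝ) + 1) ^ r * ((n : ℝ) + 1 + s))) l]
  have g0 : ((-1 : ℝ) ^ 0 * (Nat.choose l 0 : ℝ)) *
      (∑' n : ℕ, 1 / (((n : ℝ) + 1) ^ r * ((n : ℝ) + 1 + ((0 : ℕ) : ℝ)))) = zetaVal (r + 1) := by
    rw [zetaVal]
    norm_num
    exact tsum_congr fun n => by norm_num [pow_succ]
  have gshift : ∑ i ∈ range l, ((-1 : ℝ) ^ (i + 1) * (Nat.choose l (i + 1) : ℝ)) *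
      (∑' n : ℕ, 1 / (((n : ℝ) + 1) ^ r * ((n : ℝ) + 1 + ((i + 1 : ℕ) : ℝ))))
      = ∑ a ∈ Icc 1 l, (Nat.choose l a : ℝ) * (-1 : ℝ) ^ a * mu r a := by
    rw [sum_range_shift (fun s => ((-1 : ℝ) ^ s * (Nat.choose l s : ℝ)) *
      ∑' n : ℕ, 1 / (((n : ℝ) + 1) ^ r * ((n : ℝ) + 1 + (s : ℝ)))) l]
    refine Finset.sum_congr rfl fun a _ => ?_
    rw [mu_eq]
    ring
  rw [gshift, g0]
  ring

lemma LemmaB (l j : ℕ) :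
    ∑' n : ℕ, 1 / (((n : ℝ) + 1) * ((n : ℝ) + 1 + j) * (Nat.choose (n + 1 + l) l : ℝ))
      = ∑ s ∈ range (l + 1), (-1 : ℝ) ^ s * (Nat.choose l s : ℝ) * B1 s j := by
  have pw : ∀ n : ℕ, 1 / (((n : ℝ) + 1) * ((n : ℝ) + 1 + j) * (Nat.choose (n + 1 + l) l : ℝ))
      = ∑ s ∈ range (l + 1), ((-1 : ℝ) ^ s * (Nat.choose l s : ℝ)) *
          (1 / (((n : ℝ) + 1 + s) * ((n : ℝ) + 1 + j))) := by
    intro n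
    have hx : (0:ℝ) < (n : ℝ) + 1 := by positivity
    have hC := choose_cast_pos n l
    have hj : (0:ℝ) < (n : ℝ) + 1 + j := by positivity
    have step : 1 / (((n : ℝ) + 1) * ((n : ℝ) + 1 + j) * (Nat.choose (n + 1 + l) l : ℝ))
        = (1 / ((n : ℝ) + 1 + j)) * (1 / (((n : ℝ) + 1) * (Nat.choose (n + 1 + l) l : ℝ))) := by
      rw [one_div_mul_one_div]
      congr 1
      ring
    rw [step, PF1' n l, Finset.mul_sum]
    refine Finset.sum_congr rfl fun s _ => ?_
    have hs : (0:ℝ) < (n : ℝ) + 1 + s := by positivity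
    field_simp
  rw [tsum_congr pw, Summable.tsum_finsetSum (fun s _ => Summable.mul_left _ (summable_B1Term s j))]
  refine Finset.sum_congr rfl fun s _ => ?_
  rw [tsum_mul_left, B1sum s j]

theorem stmt15 (j l p : ℕ) (hj : 1 ≤ j) (hl : 1 ≤ l) (hp : 1 ≤ p) :
    ∑' n : ℕ, 1 / (((n + 1 : ℕ) : ℝ) ^ p * ((n + 1 + j : ℕ) : ℝ) *
        (Nat.choose (n + 1 + l) l : ℝ)) =
      (∑ m ∈ Finset.Icc 1 (p - 1), (-1 : ℝ) ^ (m - 1) / (j : ℝ) ^ m *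
        (zetaVal (p + 1 - m) +
         ∑ a ∈ Finset.Icc 1 l, (Nat.choose l a : ℝ) * (-1 : ℝ) ^ a * mu (p - m) a)) +
      (-1 : ℝ) ^ (p - 1) / (j : ℝ) ^ (p - 1) *
        ∑ s ∈ Finset.range (l + 1), (-1 : ℝ) ^ s * (Nat.choose l s : ℝ) * B1 s j := by
  obtain ⟨P, rfl⟩ : ∃ P, p = P + 1 := ⟨p - 1, by omega⟩
  simp only [Nat.add_sub_cancel]
  rw [← sum_range_shift (fun m => (-1 : ℝ) ^ (m - 1) / (j : ℝ) ^ m *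
        (zetaVal (P + 1 + 1 - m) +
         ∑ a ∈ Finset.Icc 1 l, (Nat.choose l a : ℝ) * (-1 : ℝ) ^ a * mu (P + 1 - m) a)) P]
  have pw : ∀ n : ℕ, 1 / (((n + 1 : ℕ) : ℝ) ^ (P + 1) * ((n + 1 + j : ℕ) : ℝ) *
        (Nat.choose (n + 1 + l) l : ℝ))
      = (∑ i ∈ range P, ((-1 : ℝ) ^ i / (j : ℝ) ^ (i + 1)) *
            (1 / (((n : ℝ) + 1) ^ (P + 1 - i) * (Nat.choose (n + 1 + l) l : ℝ))))
        + ((-1 : ℝ) ^ P / (j : ℝ) ^ P) *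
            (1 / (((n : ℝ) + 1) * ((n : ℝ) + 1 + j) * (Nat.choose (n + 1 + l) l : ℝ))) := by
    intro n
    have hx : (0:ℝ) < (n : ℝ) + 1 := by positivity
    have hC := choose_cast_pos n l
    have h2 := PF2 P j hj ((n : ℝ) + 1) hx
    have lhs_eq : 1 / (((n + 1 : ℕ) : ℝ) ^ (P + 1) * ((n + 1 + j : ℕ) : ℝ) *
          (Nat.choose (n + 1 + l) l : ℝ))
        = (1 / (((n : ℝ) + 1) ^ (P + 1) * (((n : ℝ) + 1) + j))) *
            (1 / (Nat.choose (n + 1 + l) l : ℝ)) := by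
      push_cast
      rw [one_div_mul_one_div]
    rw [lhs_eq, h2, add_mul, Finset.sum_mul]
    congr 1
    · refine Finset.sum_congr rfl fun i _ => ?_
      rw [mul_assoc, one_div_mul_one_div]
    · rw [mul_assoc, one_div_mul_one_div]
  rw [tsum_congr pw]
  rw [Summable.tsum_add
    (summable_sum (fun i hi => Summable.mul_left _ (summable_choose_term (P + 1 - i) l (by
      simp only [Finset.mem_range] at hi; omega))))
    (Summable.mul_left _ (summable_U_term l j))]
  rw [Summable.tsum_finsetSum (fun i hi => Summable.mul_left _ (summable_choose_term (P + 1 - i) l (by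
      simp only [Finset.mem_range] at hi; omega)))]
  congr 1
  · refine Finset.sum_congr rfl fun i hi => ?_
    simp only [Finset.mem_range] at hi
    rw [tsum_mul_left]
    have hexp : P + 1 - i = (P - i) + 1 := by omega
    rw [hexp, LemmaA (P - i) l (by omega)]
    have e1 : (i + 1 : ℕ) - 1 = i := by omega
    have e2 : P + 1 + 1 - (i + 1) = (P - i) + 1 := by omega
    have e3 : P + 1 - (i + 1) = P - i := by omega
    rw [e1, e2, e3]
  · rw [tsum_mul_left, LemmaB l j]
end

section
/- Let p ≥ 1 and l ≥ 1 be integers with p + l ≥ 2. Then Σ_{n=1}^∞ 1/(n^p C(n+l,l)) = Σ_{a=1}^l C(l,a) { Σ_{m=1}^{p-1} ((-1)^{a+m}/a^{m-1}) ζ(p+1-m) + ((-1)^{a+p}/a^{p-1}) H_a }. -/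
open Finset Filter Topology

lemma zeta_hasSum (k : ℕ) (hk : 2 ≤ k) :
    HasSum (fun n : ℕ => 1 / ((n : ℝ) + 1) ^ k) (zetaVal k) := by
  have h1 : Summable (fun n : ℕ => 1 / (n : ℝ) ^ k) := Real.summable_one_div_nat_pow.mpr hk
  have h2 := (summable_nat_add_iff 1).mpr h1
  have h3 : Summable (fun n : ℕ => 1 / ((n : ℝ) + 1) ^ k) := by
    refine h2.congr fun n => ?_
    push_cast; ring_nf
  exact h3.hasSum

lemma tel_hasSum (j : ℕ) :
    HasSum (fun n : ℕ => 1 / (((n : ℝ) + j + 1) * ((n : ℝ) + j + 2))) (1 / ((j : ℝ) + 1)) := by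
  have hnn : ∀ n : ℕ, 0 ≤ 1 / (((n : ℝ) + j + 1) * ((n : ℝ) + j + 2)) := by
    intro n; positivity
  rw [hasSum_iff_tendsto_nat_of_nonneg hnn]
  have key : ∀ N : ℕ, ∑ n ∈ range N, 1 / (((n : ℝ) + j + 1) * ((n : ℝ) + j + 2))
      = 1 / ((j : ℝ) + 1) - 1 / ((N : ℝ) + j + 1) := by
    intro N
    induction N with
    | zero => simp
    | succ N ih =>
      rw [Finset.sum_range_succ, ih]
      have h1 : ((N : ℝ) + j + 1) ≠ 0 := by positivity
      have h2 : ((N : ℝ) + j + 2) ≠ 0 := by positivity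
      have h3 : ((j : ℝ) + 1) ≠ 0 := by positivity
      push_cast
      field_simp
      ring
  simp_rw [key]
  have h4 : Tendsto (fun N : ℕ => 1 / ((N : ℝ) + j + 1)) atTop (𝓝 0) := by
    have h5 : Tendsto (fun N : ℕ => ((N : ℝ) + j + 1)) atTop atTop := by
      apply tendsto_atTop_add_const_right
      exact tendsto_atTop_add_const_right _ _ tendsto_natCast_atTop_atTop
    simpa [one_div, Pi.inv_def] using h5.inv_tendsto_atTop
  simpa using (tendsto_const_nhds.sub h4)

lemma fin_tel (a n : ℕ) :
    ∑ j ∈ range a, 1 / (((n : ℝ) + j + 1) * ((n : ℝ) + j + 2))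
      = 1 / ((n : ℝ) + 1) - 1 / ((n : ℝ) + a + 1) := by
  induction a with
  | zero => simp
  | succ a ih =>
    rw [Finset.sum_range_succ, ih]
    have h1 : ((n : ℝ) + a + 1) ≠ 0 := by positivity
    have h2 : ((n : ℝ) + a + 2) ≠ 0 := by positivity
    have h3 : ((n : ℝ) + 1) ≠ 0 := by positivity
    push_cast
    field_simp
    ring

lemma Hgen_eq (a : ℕ) : Hgen 1 a = ∑ j ∈ range a, 1 / ((j : ℝ) + 1) := by
  rw [Hgen, ← Finset.Ico_add_one_right_eq_Icc, Finset.sum_Ico_eq_sum_range]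
  refine Finset.sum_congr rfl fun i _ => ?_
  push_cast; rw [pow_one]; ring_nf

lemma base_hasSum (a : ℕ) (ha : 1 ≤ a) :
    HasSum (fun n : ℕ => 1 / (((n : ℝ) + 1) * ((n : ℝ) + 1 + a))) (Hgen 1 a / a) := by
  have h1 : HasSum (fun n : ℕ => ∑ j ∈ range a, 1 / (((n : ℝ) + j + 1) * ((n : ℝ) + j + 2)))
      (∑ j ∈ range a, 1 / ((j : ℝ) + 1)) := hasSum_sum fun j _ => tel_hasSum j
  have h2 := h1.div_const (a : ℝ)
  rw [← Hgen_eq] at h2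
  refine h2.congr_fun fun n => ?_
  rw [fin_tel]
  have h1' : ((n : ℝ) + 1) ≠ 0 := by positivity
  have h2' : ((n : ℝ) + a + 1) ≠ 0 := by positivity
  have h3' : (a : ℝ) ≠ 0 := by positivity
  field_simp
  ring

lemma inner_hasSum (a : ℕ) (ha : 1 ≤ a) (p : ℕ) (hp : 1 ≤ p) :
    HasSum (fun n : ℕ => 1 / (((n : ℝ) + 1) ^ p * ((n : ℝ) + 1 + a)))
      ((∑ i ∈ range (p - 1), (-1 : ℝ) ^ i * zetaVal (p - i) / (a : ℝ) ^ (i + 1))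
        + (-1 : ℝ) ^ (p - 1) * Hgen 1 a / (a : ℝ) ^ p) := by
  have ha0 : (a : ℝ) ≠ 0 := by positivity
  induction p, hp using Nat.le_induction with
  | base =>
    simpa using base_hasSum a ha
  | succ p hp ih =>
    obtain ⟨q, rfl⟩ : ∃ q, p = q + 1 := ⟨p - 1, (Nat.succ_pred_eq_of_pos hp).symm⟩
    have hz := zeta_hasSum (q + 2) (by omega)
    have hstep := (hz.sub ih).div_const (a : ℝ)
    have hfun : ∀ n : ℕ,
        (1 / ((n : ℝ) + 1) ^ (q + 2) - 1 / (((n : ℝ) + 1) ^ (q + 1) * ((n : ℝ) + 1 + a))) / a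
          = 1 / (((n : ℝ) + 1) ^ (q + 1 + 1) * ((n : ℝ) + 1 + a)) := by
      intro n
      have h1 : ((n : ℝ) + 1) ≠ 0 := by positivity
      have h2 : ((n : ℝ) + 1 + a) ≠ 0 := by positivity
      field_simp
      ring
    have hval :
        (zetaVal (q + 2)
          - ((∑ i ∈ range (q + 1 - 1), (-1 : ℝ) ^ i * zetaVal (q + 1 - i) / (a : ℝ) ^ (i + 1))
            + (-1 : ℝ) ^ (q + 1 - 1) * Hgen 1 a / (a : ℝ) ^ (q + 1))) / a
        = (∑ i ∈ range (q + 1 + 1 - 1), (-1 : ℝ) ^ i * zetaVal (q + 1 + 1 - i) / (a : ℝ) ^ (i + 1))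
            + (-1 : ℝ) ^ (q + 1 + 1 - 1) * Hgen 1 a / (a : ℝ) ^ (q + 1 + 1) := by
      simp only [Nat.add_sub_cancel]
      rw [Finset.sum_range_succ']
      have hshift : ∀ i ∈ range q,
          (-1 : ℝ) ^ (i + 1) * zetaVal (q + 1 + 1 - (i + 1)) / (a : ℝ) ^ (i + 1 + 1)
            = -(((-1 : ℝ) ^ i * zetaVal (q + 1 - i) / (a : ℝ) ^ (i + 1)) / a) := by
        intro i _
        have : q + 1 + 1 - (i + 1) = q + 1 - i := by omega
        rw [this, pow_succ, pow_succ]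
        field_simp
      rw [Finset.sum_congr rfl hshift, Finset.sum_neg_distrib]
      have hH : (-1 : ℝ) ^ (q + 1) * Hgen 1 a / (a : ℝ) ^ (q + 2)
          = -(((-1 : ℝ) ^ q * Hgen 1 a / (a : ℝ) ^ (q + 1)) / a) := by
        rw [pow_succ (-1 : ℝ), pow_succ (a : ℝ)]
        field_simp
      rw [show (q+2 : ℕ) = q + 1 + 1 from rfl] at hH
      rw [hH]
      rw [← Finset.sum_div]
      simp only [pow_zero, one_mul, Nat.sub_zero, pow_one]
      ring
    rw [hval] at hstep
    exact hstep.congr_fun fun n => (hfun n).symm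

lemma pf : ∀ (l : ℕ) (y : ℝ), 0 < y →
    ∑ a ∈ range (l + 1), (-1 : ℝ) ^ a * (l.choose a) / (y + a)
      = (Nat.factorial l : ℝ) / ∏ j ∈ range (l + 1), (y + j) := by
  intro l
  induction l with
  | zero => intro y hy; simp
  | succ l ih =>
    intro y hy
    have hy1 : (0 : ℝ) < y + 1 := by linarith
    have hP : (0 : ℝ) < ∏ j ∈ range (l + 1), (y + j) := by
      apply Finset.prod_pos; intro j _; positivity
    have hP' : (0 : ℝ) < ∏ j ∈ range (l + 1), (y + 1 + j) := by
      apply Finset.prod_pos; intro j _; positivity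
    have hQ : (0 : ℝ) < ∏ j ∈ range (l + 2), (y + j) := by
      apply Finset.prod_pos; intro j _; positivity
    rw [Finset.sum_range_succ']
    push_cast
    have hsplit : ∀ a ∈ range (l + 1),
        (-1 : ℝ) ^ (a + 1) * ((l + 1).choose (a + 1)) / (y + (a + 1))
          = -((-1 : ℝ) ^ a * (l.choose a) / ((y + 1) + a))
            + (-1 : ℝ) ^ (a + 1) * (l.choose (a + 1)) / (y + (a + 1)) := by
      intro a _
      rw [Nat.choose_succ_succ]
      push_cast
      have : (y + ((a : ℝ) + 1)) ≠ 0 := by positivity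
      have : ((y + 1) + (a : ℝ)) ≠ 0 := by positivity
      field_simp
      ring
    rw [Finset.sum_congr rfl hsplit, Finset.sum_add_distrib, Finset.sum_neg_distrib,
      ih (y + 1) hy1]
    have e : ∑ a ∈ range (l + 2), (-1 : ℝ) ^ a * (l.choose a) / (y + a)
        = ∑ a ∈ range (l + 1), (-1 : ℝ) ^ a * (l.choose a) / (y + a) := by
      rw [Finset.sum_range_succ, Nat.choose_succ_self]
      simp
    have hsecond : ∑ x ∈ range (l + 1),
        (-1 : ℝ) ^ (x + 1) * (l.choose (x + 1)) / (y + ((x : ℝ) + 1))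
          + (-1 : ℝ) ^ 0 * (((l + 1).choose 0 : ℕ) : ℝ) / (y + 0)
        = (Nat.factorial l : ℝ) / ∏ j ∈ range (l + 1), (y + j) := by
      rw [← ih y hy, ← e]
      conv_rhs => rw [Finset.sum_range_succ']
      congr 1
      · exact Finset.sum_congr rfl fun x _ => by push_cast; ring_nf
      · simp
    rw [add_assoc, hsecond]
    have hQ1 : ∏ j ∈ range (l + 2), (y + (j : ℝ))
        = (∏ j ∈ range (l + 1), (y + j)) * (y + (l + 1)) := by
      rw [Finset.prod_range_succ]; push_cast; ring
    have hQ2 : ∏ j ∈ range (l + 2), (y + (j : ℝ))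
        = (∏ j ∈ range (l + 1), (y + 1 + j)) * y := by
      rw [Finset.prod_range_succ']
      congr 1
      · exact Finset.prod_congr rfl fun x _ => by push_cast; ring
      · simp
    rw [eq_div_iff hQ.ne']
    have expand : (-((Nat.factorial l : ℝ) / ∏ j ∈ range (l + 1), (y + 1 + j))
          + (Nat.factorial l : ℝ) / ∏ j ∈ range (l + 1), (y + j))
          * ∏ j ∈ range (l + 2), (y + (j : ℝ))
        = -((Nat.factorial l : ℝ) / ∏ j ∈ range (l + 1), (y + 1 + j))
            * ((∏ j ∈ range (l + 1), (y + 1 + j)) * y)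
          + ((Nat.factorial l : ℝ) / ∏ j ∈ range (l + 1), (y + j))
            * ((∏ j ∈ range (l + 1), (y + j)) * (y + (l + 1))) := by
      rw [← hQ1, ← hQ2]; ring
    rw [expand]
    field_simp
    rw [Nat.factorial_succ]
    push_cast
    ring

lemma prod_fact (n L : ℕ) :
    Nat.factorial (n + 1) * ∏ j ∈ range L, (n + 2 + j) = Nat.factorial (n + 1 + L) := by
  induction L with
  | zero => simp
  | succ L ih =>
    rw [Finset.prod_range_succ, ← Nat.mul_assoc, ih]
    rw [show n + 1 + (L + 1) = (n + 1 + L) + 1 by omega, Nat.factorial_succ]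
    ring

lemma choose_prod (n L : ℕ) :
    Nat.choose (n + 1 + L) L * Nat.factorial L = ∏ j ∈ range L, (n + 2 + j) := by
  have h1 := Nat.choose_mul_factorial_mul_factorial (show L ≤ n + 1 + L by omega)
  rw [show n + 1 + L - L = n + 1 by omega] at h1
  have h2 := prod_fact n L
  have h3 : 0 < Nat.factorial (n + 1) := Nat.factorial_pos _
  nlinarith [h1, h2]

lemma pointwise (l : ℕ) (hl : 1 ≤ l) (n : ℕ) :
    ∑ a ∈ Icc 1 l, (-1 : ℝ) ^ (a - 1) * a * (l.choose a) / ((n : ℝ) + 1 + a)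
      = 1 / (Nat.choose (n + 1 + l) l : ℝ) := by
  obtain ⟨l', rfl⟩ : ∃ l', l = l' + 1 := ⟨l - 1, by omega⟩
  rw [← Finset.Ico_add_one_right_eq_Icc, Finset.sum_Ico_eq_sum_range]
  simp only [Nat.add_sub_cancel]
  have step : ∀ i ∈ range (l' + 1),
      (-1 : ℝ) ^ (1 + i - 1) * ((1 + i : ℕ) : ℝ) * ((l' + 1).choose (1 + i)) / ((n : ℝ) + 1 + ((1 + i : ℕ) : ℝ))
          = ((l' : ℝ) + 1) * ((-1 : ℝ) ^ i * (l'.choose i) / (((n : ℝ) + 2) + i)) := by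
    intro i _
    have hch : (1 + i) * ((l' + 1).choose (1 + i)) = (l' + 1) * (l'.choose i) := by
      rw [Nat.add_comm 1 i, Nat.mul_comm]
      exact (Nat.add_one_mul_choose_eq l' i).symm
    have hcast : ((1 + i : ℕ) : ℝ) * (((l' + 1).choose (1 + i) : ℕ) : ℝ)
        = ((l' : ℝ) + 1) * ((l'.choose i : ℕ) : ℝ) := by exact_mod_cast congrArg (Nat.cast (R := ℝ)) hch
    rw [show (1 + i - 1 : ℕ) = i by omega]
    have hd : ((n : ℝ) + 1 + ((1 + i : ℕ) : ℝ)) = ((n : ℝ) + 2) + i := by push_cast; ring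
    rw [hd]
    have hne : ((n : ℝ) + 2 + i) ≠ 0 := by positivity
    push_cast at hcast ⊢
    field_simp
    linear_combination hcast
  rw [Finset.sum_congr rfl step, ← Finset.mul_sum, pf l' ((n : ℝ) + 2) (by positivity)]
  have hprod : ∏ j ∈ range (l' + 1), ((n : ℝ) + 2 + j)
      = ((∏ j ∈ range (l' + 1), (n + 2 + j) : ℕ) : ℝ) := by push_cast; ring_nf
  rw [hprod, ← choose_prod n (l' + 1)]
  have hc : 0 < Nat.choose (n + 1 + (l' + 1)) (l' + 1) := Nat.choose_pos (by omega)
  have hc' : ((Nat.choose (n + 1 + (l' + 1)) (l' + 1) : ℕ) : ℝ) ≠ 0 := by positivity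
  have hf : ((Nat.factorial (l' + 1) : ℕ) : ℝ) ≠ 0 := by positivity
  push_cast
  rw [Nat.factorial_succ]
  push_cast
  field_simp

theorem stmt16 (p l : ℕ) (hp : 1 ≤ p) (hl : 1 ≤ l) (h : 2 ≤ p + l) :
    ∑' n : ℕ, 1 / (((n + 1 : ℕ) : ℝ) ^ p * (Nat.choose (n + 1 + l) l : ℝ)) =
      ∑ a ∈ Finset.Icc 1 l, (Nat.choose l a : ℝ) *
        ((∑ m ∈ Finset.Icc 1 (p - 1),
            (-1 : ℝ) ^ (a + m) / (a : ℝ) ^ (m - 1) * zetaVal (p + 1 - m)) +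
         (-1 : ℝ) ^ (a + p) / (a : ℝ) ^ (p - 1) * Hgen 1 a) := by
  have key : ∀ n : ℕ, 1 / (((n + 1 : ℕ) : ℝ) ^ p * ((n + 1 + l).choose l : ℝ))
      = ∑ a ∈ Icc 1 l, ((-1 : ℝ) ^ (a - 1) * a * (l.choose a))
          * (1 / (((n : ℝ) + 1) ^ p * ((n : ℝ) + 1 + a))) := by
    intro n
    have h1 : (((n + 1 : ℕ) : ℝ)) = (n : ℝ) + 1 := by push_cast; ring
    rw [h1]
    have h2 := pointwise l hl n
    calc 1 / (((n : ℝ) + 1) ^ p * ((n + 1 + l).choose l : ℝ))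
        = (1 / ((n : ℝ) + 1) ^ p) * (1 / ((n + 1 + l).choose l : ℝ)) := by ring
      _ = (1 / ((n : ℝ) + 1) ^ p)
            * ∑ a ∈ Icc 1 l, (-1 : ℝ) ^ (a - 1) * a * (l.choose a) / ((n : ℝ) + 1 + a) := by
          rw [h2]
      _ = ∑ a ∈ Icc 1 l, ((-1 : ℝ) ^ (a - 1) * a * (l.choose a))
            * (1 / (((n : ℝ) + 1) ^ p * ((n : ℝ) + 1 + a))) := by
          rw [Finset.mul_sum]
          refine Finset.sum_congr rfl fun a _ => ?_
          have hp1 : ((n : ℝ) + 1) ≠ 0 := by positivity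
          have hp2 : ((n : ℝ) + 1 + (a : ℝ)) ≠ 0 := by positivity
          field_simp
  rw [tsum_congr key,
    Summable.tsum_finsetSum (fun a ha => ((inner_hasSum a (Finset.mem_Icc.mp ha).1 p hp).summable.mul_left _))]
  refine Finset.sum_congr rfl fun a ha => ?_
  have ha1 : 1 ≤ a := (Finset.mem_Icc.mp ha).1
  have ha0 : (a : ℝ) ≠ 0 := by positivity
  rw [((inner_hasSum a ha1 p hp).mul_left _).tsum_eq]
  rw [← Finset.Ico_add_one_right_eq_Icc, Finset.sum_Ico_eq_sum_range, Nat.add_sub_cancel]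
  rw [mul_add, mul_add, Finset.mul_sum, Finset.mul_sum]
  congr 1
  · refine Finset.sum_congr rfl fun i _ => ?_
    rw [show p + 1 - (1 + i) = p - i by omega, show 1 + i - 1 = i by omega]
    have hsgn : (-1 : ℝ) ^ (a + (1 + i)) = (-1) ^ (a - 1) * (-1) ^ i := by
      rw [show a + (1 + i) = (a - 1) + i + 2 by omega, pow_add, pow_add]
      norm_num
    rw [hsgn, pow_succ]
    field_simp
  · have hsgn2 : (-1 : ℝ) ^ (a + p) = (-1) ^ (a - 1) * (-1) ^ (p - 1) := by
      rw [show a + p = (a - 1) + (p - 1) + 2 by omega, pow_add, pow_add]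
      norm_num
    have hpow : (a : ℝ) ^ p = a ^ (p - 1) * a := by
      rw [← pow_succ]; congr 1; omega
    rw [hsgn2, hpow]
    field_simp
end

section
/- Let r, p be positive integers and l ≥ 1 an integer. Then Σ_{n=1}^r 1/(n^{p+1} C(n+l,l)) = H_r^{(p+1)} + Σ_{a=1}^l (-1)^a C(l,a) { Σ_{j=1}^p ((-1)^{p+j}/a^{p+1-j}) H_r^{(j)} + ((-1)^p/a^p)(H_{a+r} - H_a) }. -/
open Finset

lemma pf_tele (p : ℕ) (a n : ℝ) (ha : a ≠ 0) (hn : n ≠ 0) (hna : n + a ≠ 0) :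
    (∑ j ∈ Icc 1 p, (-1:ℝ)^(p+j)/(a^(p+1-j) * n^j)) =
      1/(n^p * (n+a)) - (-1:ℝ)^p/(a^p*(n+a)) := by
  set F : ℕ → ℝ := fun j => (-1:ℝ)^(p+j)/(a^(p-j) * n^j * (n+a)) with hF
  have h1 : (∑ j ∈ Icc 1 p, (-1:ℝ)^(p+j)/(a^(p+1-j) * n^j)) =
      ∑ i ∈ range p, (F (i+1) - F i) := by
    rw [show Icc 1 p = Ico 1 (p+1) by rfl, Finset.sum_Ico_eq_sum_range]
    simp only [Nat.add_sub_cancel]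
    refine Finset.sum_congr rfl fun i hi => ?_
    have hip : i < p := Finset.mem_range.mp hi
    obtain ⟨k, hk⟩ : ∃ k, p = i + k + 1 := ⟨p - i - 1, by omega⟩
    subst hk
    simp only [hF]
    have e1 : i + k + 1 + 1 - (1 + i) = k + 1 := by omega
    have e2 : i + k + 1 - (i + 1) = k := by omega
    have e3 : i + k + 1 - i = k + 1 := by omega
    rw [e1, e2, e3]
    have s1 : (-1:ℝ)^(i+k+1+(1+i)) = (-1)^k := by
      rw [show i+k+1+(1+i) = k + 2*(i+1) by ring, pow_add, pow_mul]
      simp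
    have s2 : (-1:ℝ)^(i+k+1+(i+1)) = (-1)^k := by
      rw [show i+k+1+(i+1) = k + 2*(i+1) by ring, pow_add, pow_mul]
      simp
    have s3 : (-1:ℝ)^(i+k+1+i) = -(-1:ℝ)^k := by
      rw [show i+k+1+i = k + (2*i+1) by ring, pow_add, pow_succ, pow_mul]
      simp
    rw [s1, s2, s3]
    have hak : a^k ≠ 0 := pow_ne_zero _ ha
    have hni : n^i ≠ 0 := pow_ne_zero _ hn
    field_simp
    ring
  rw [h1, Finset.sum_range_sub]
  simp only [hF, Nat.sub_self, pow_zero, one_mul, Nat.sub_zero]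
  rw [add_zero, mul_one, show p+p = 2*p by ring, pow_mul, neg_one_sq, one_pow]

lemma bin_sum (l : ℕ) : ∀ n : ℝ, 0 < n →
    ∑ a ∈ range (l+1), (-1:ℝ)^a * (l.choose a : ℝ) / (n + (a:ℕ)) =
      (Nat.factorial l : ℝ) / ∏ a ∈ range (l+1), (n + (a:ℕ)) := by
  induction l with
  | zero => intro n hn; simp
  | succ l ih =>
    intro n hn
    have hP : ∀ m : ℕ, ∀ x : ℝ, 0 < x → (0:ℝ) < ∏ a ∈ range (m+1), (x + (a:ℕ)) := by
      intro m x hx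
      apply Finset.prod_pos
      intro i _
      positivity
    have key : ∑ a ∈ range (l+1+1), (-1:ℝ)^a * ((l+1).choose a : ℝ) / (n + (a:ℕ)) =
        (∑ a ∈ range (l+1), (-1:ℝ)^a * (l.choose a : ℝ) / (n + (a:ℕ)))
        - ∑ a ∈ range (l+1), (-1:ℝ)^a * (l.choose a : ℝ) / ((n+1) + (a:ℕ)) := by
      rw [Finset.sum_range_succ' _ (l+1)]
      have expand : ∀ i ∈ range (l+1),
          (-1:ℝ)^(i+1) * ((l+1).choose (i+1) : ℝ) / (n + ((i+1:ℕ):ℝ)) =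
          (-((-1:ℝ)^i * (l.choose i : ℝ) / ((n+1) + (i:ℕ))))
          + (-1:ℝ)^(i+1) * (l.choose (i+1) : ℝ) / (n + ((i+1:ℕ):ℝ)) := by
        intro i _
        rw [Nat.choose_succ_succ]
        push_cast
        ring
      rw [Finset.sum_congr rfl expand, Finset.sum_add_distrib, Finset.sum_neg_distrib]
      have shift : ∑ i ∈ range (l+1), (-1:ℝ)^(i+1) * (l.choose (i+1) : ℝ) / (n + ((i+1:ℕ):ℝ))
          = (∑ a ∈ range (l+1), (-1:ℝ)^a * (l.choose a : ℝ) / (n + (a:ℕ)))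
            - (-1:ℝ)^0 * (l.choose 0 : ℝ) / (n + ((0:ℕ):ℝ)) := by
        rw [eq_sub_iff_add_eq, ← Finset.sum_range_succ' (fun a => (-1:ℝ)^a * (l.choose a : ℝ) / (n + (a:ℕ))) (l+1),
          Finset.sum_range_succ]
        simp [Nat.choose_succ_self]
      rw [shift]
      simp
      ring
    rw [key, ih n hn, ih (n+1) (by linarith)]
    have hPn := hP l n hn
    have hPn1 := hP l (n+1) (by linarith)
    have hPs := hP (l+1) n hn
    have rec1 : ∏ a ∈ range (l+1+1), (n + (a:ℕ)) = (∏ a ∈ range (l+1), (n + (a:ℕ))) * (n + (l+1:ℕ)) := by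
      rw [Finset.prod_range_succ]
    have rec2 : ∏ a ∈ range (l+1+1), (n + (a:ℕ)) = (∏ a ∈ range (l+1), ((n+1) + (a:ℕ))) * n := by
      rw [Finset.prod_range_succ' (fun a => n + (a:ℕ)) (l+1)]
      congr 1
      · refine Finset.prod_congr rfl fun i _ => ?_
        push_cast; ring
      · simp
    rw [div_sub_div _ _ (ne_of_gt hPn) (ne_of_gt hPn1), div_eq_div_iff (by positivity) (ne_of_gt hPs)]
    rw [Nat.factorial_succ]
    push_cast at rec1 rec2 ⊢
    linear_combination ((l.factorial : ℝ) * ∏ a ∈ range (l+1), (n + 1 + (a:ℝ))) * rec1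
      - ((∏ a ∈ range (l+1), (n + (a:ℝ))) * (l.factorial : ℝ)) * rec2

lemma prod_choose (l n : ℕ) : ∏ a ∈ range (l+1), ((n:ℝ) + (a:ℕ)) =
    (n:ℝ) * (Nat.factorial l : ℝ) * ((n+l).choose l : ℝ) := by
  induction l with
  | zero => simp
  | succ l ih =>
    rw [Finset.prod_range_succ, ih]
    have h := Nat.add_one_mul_choose_eq (n+l) l
    have h' : ((n+l+1) * ((n+l).choose l) : ℕ) = ((n+l+1).choose (l+1) * (l+1) : ℕ) := h
    have hc : ((n:ℝ)+l+1) * ((n+l).choose l : ℝ) = ((n+l+1).choose (l+1) : ℝ) * (l+1) := by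
      exact_mod_cast congrArg (Nat.cast : ℕ → ℝ) h'
    rw [Nat.factorial_succ]
    push_cast
    rw [show (n:ℝ) + ((l:ℝ)+1) = (n:ℝ)+l+1 by ring, show n+(l+1) = n+l+1 by omega]
    linear_combination ((n:ℝ) * (l.factorial : ℝ)) * hc

lemma per_n (l p n : ℕ) (hn : 1 ≤ n) :
    1 / ((n:ℝ)^(p+1) * (((n+l).choose l : ℕ) : ℝ)) =
      1/(n:ℝ)^(p+1) + ∑ a ∈ Icc 1 l, (-1:ℝ)^a * (l.choose a : ℝ) * (1/((n:ℝ)^p * ((n:ℝ)+(a:ℕ)))) := by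
  have hn0 : (0:ℝ) < (n:ℝ) := by exact_mod_cast hn
  have hC : (0:ℝ) < (((n+l).choose l : ℕ) : ℝ) := by
    exact_mod_cast Nat.choose_pos (by omega : l ≤ n + l)
  have hf : (0:ℝ) < (Nat.factorial l : ℝ) := by exact_mod_cast Nat.factorial_pos l
  have h2 : ∑ a ∈ range (l+1), (-1:ℝ)^a * (l.choose a : ℝ) / ((n:ℝ) + (a:ℕ)) =
      1/((n:ℝ) * (((n+l).choose l : ℕ) : ℝ)) := by
    rw [bin_sum l (n:ℝ) hn0, prod_choose l n]
    field_simp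
  have h3 : ∑ a ∈ Icc 1 l, (-1:ℝ)^a * (l.choose a : ℝ) / ((n:ℝ) + (a:ℕ)) =
      1/((n:ℝ) * (((n+l).choose l : ℕ) : ℝ)) - 1/(n:ℝ) := by
    rw [← h2, Finset.sum_range_succ' (fun a => (-1:ℝ)^a * (l.choose a : ℝ) / ((n:ℝ) + (a:ℕ))) l]
    rw [show Icc 1 l = Ico 1 (l+1) by rfl, Finset.sum_Ico_eq_sum_range]
    simp only [Nat.add_sub_cancel, Nat.choose_zero_right, pow_zero, Nat.cast_zero, Nat.cast_one,
      one_mul, add_zero]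
    have : ∀ i ∈ range l, (-1:ℝ)^(1+i) * (l.choose (1+i) : ℝ) / ((n:ℝ) + ((1+i:ℕ):ℝ)) =
        (-1:ℝ)^(i+1) * (l.choose (i+1) : ℝ) / ((n:ℝ) + ((i+1:ℕ):ℝ)) := by
      intro i _
      rw [Nat.add_comm 1 i]
    rw [Finset.sum_congr rfl this]
    ring
  have hsum : ∑ a ∈ Icc 1 l, (-1:ℝ)^a * (l.choose a : ℝ) * (1/((n:ℝ)^p * ((n:ℝ)+(a:ℕ)))) =
      (1/(n:ℝ)^p) * ∑ a ∈ Icc 1 l, (-1:ℝ)^a * (l.choose a : ℝ) / ((n:ℝ) + (a:ℕ)) := by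
    rw [Finset.mul_sum]
    refine Finset.sum_congr rfl fun a _ => ?_
    have hna : (n:ℝ) + (a:ℕ) ≠ 0 := by positivity
    field_simp
  rw [hsum, h3]
  have hnp : ((n:ℝ))^p ≠ 0 := pow_ne_zero _ (ne_of_gt hn0)
  field_simp
  ring

lemma hgen_shift (a : ℕ) : ∀ r : ℕ, ∑ n ∈ Icc 1 r, 1/((n:ℝ)+(a:ℕ)) = Hgen 1 (a+r) - Hgen 1 a := by
  intro r
  induction r with
  | zero => simp
  | succ r ih =>
    rw [Finset.sum_Icc_succ_top (by omega : 1 ≤ r+1), ih]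
    have : Hgen 1 (a+(r+1)) = Hgen 1 (a+r) + 1/(((a+r+1:ℕ)):ℝ) := by
      unfold Hgen
      rw [show a+(r+1) = (a+r)+1 by omega, Finset.sum_Icc_succ_top (by omega : 1 ≤ (a+r)+1)]
      simp
    rw [this]
    push_cast
    ring

lemma per_a (p r a : ℕ) (ha : 1 ≤ a) :
    ∑ n ∈ Icc 1 r, (1/((n:ℝ)^p * ((n:ℝ)+(a:ℕ)))) =
      (∑ j ∈ Icc 1 p, (-1:ℝ)^(p+j)/(a:ℝ)^(p+1-j) * Hgen j r)
      + (-1:ℝ)^p/(a:ℝ)^p * (Hgen 1 (a+r) - Hgen 1 a) := by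
  have ha0 : (0:ℝ) < (a:ℝ) := by exact_mod_cast ha
  have key : ∀ n ∈ Icc 1 r, 1/((n:ℝ)^p * ((n:ℝ)+(a:ℕ))) =
      (∑ j ∈ Icc 1 p, (-1:ℝ)^(p+j)/((a:ℝ)^(p+1-j) * (n:ℝ)^j)) + (-1:ℝ)^p/((a:ℝ)^p*((n:ℝ)+(a:ℕ))) := by
    intro n hn
    have hn1 : 1 ≤ n := (Finset.mem_Icc.mp hn).1
    have hn0 : (0:ℝ) < (n:ℝ) := by exact_mod_cast hn1
    have h := pf_tele p (a:ℝ) (n:ℝ) (ne_of_gt ha0) (ne_of_gt hn0) (by positivity)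
    linarith [h]
  rw [Finset.sum_congr rfl key, Finset.sum_add_distrib]
  congr 1
  · rw [Finset.sum_comm]
    refine Finset.sum_congr rfl fun j _ => ?_
    unfold Hgen
    rw [Finset.mul_sum]
    refine Finset.sum_congr rfl fun n _ => ?_
    ring
  · rw [← hgen_shift a r, Finset.mul_sum]
    refine Finset.sum_congr rfl fun n _ => ?_
    have hna : (n:ℝ) + (a:ℕ) ≠ 0 := by positivity
    have haa : ((a:ℝ)) ≠ 0 := ne_of_gt ha0
    field_simp

theorem stmt19 (r p : ℕ) (hr : 1 ≤ r) (hp : 1 ≤ p) (l : ℕ) (hl : 1 ≤ l) :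
    ∑ n ∈ Finset.Icc 1 r, 1 / ((n : ℝ) ^ (p + 1) * (Nat.choose (n + l) l : ℝ)) =
      Hgen (p + 1) r + ∑ a ∈ Finset.Icc 1 l, (-1 : ℝ) ^ a * (Nat.choose l a : ℝ) *
        ((∑ j ∈ Finset.Icc 1 p, (-1 : ℝ) ^ (p + j) / (a : ℝ) ^ (p + 1 - j) * Hgen j r) +
         (-1 : ℝ) ^ p / (a : ℝ) ^ p * (Hgen 1 (a + r) - Hgen 1 a)) := by
  rw [Finset.sum_congr rfl (fun n hn => per_n l p n (Finset.mem_Icc.mp hn).1),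
    Finset.sum_add_distrib, Finset.sum_comm]
  congr 1
  · refine Finset.sum_congr rfl fun a ha => ?_
    rw [← Finset.mul_sum, per_a p r a (Finset.mem_Icc.mp ha).1]
end
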